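/- arXiv:1505.05343 — 5 statements merged into one kernel-verified Lean document; each statement's English description precedes it below -/
import Mathlib

section
/- The number of lattice paths from (0,0) to (k,k) using unit steps north (1,0) and east (0,1) that pass through exactly i points of the form (j,j) with j>0 equals i·2^i·C(2k-i, k)/(2k-i), for 1 ≤ i ≤ k. -/
/-- Number of `true`s among the first `t` coordinates of `f` (prefix count of north steps). -/
def prefixTrue {m : ℕ} (f : Fin m → Bool) (t : ℕ) : ℕ :=
  (Finset.univ.filter (fun s : Fin m => s.val < t ∧ f s = true)).card

lemma prefixTrue_eq_sum {m : ℕ} (f : Fin m → Bool) (t : ℕ) :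
    prefixTrue f t = ∑ s : Fin m, if s.val < t ∧ f s = true then 1 else 0 := by
  unfold prefixTrue; rw [Finset.card_filter]

lemma prefixTrue_snoc_le {n : ℕ} (g : Fin n → Bool) (b : Bool) {t : ℕ} (ht : t ≤ n) :
    prefixTrue (Fin.snoc g b) t = prefixTrue g t := by
  rw [prefixTrue_eq_sum, prefixTrue_eq_sum, Fin.sum_univ_castSucc]
  simp only [Fin.snoc_castSucc, Fin.snoc_last, Fin.coe_castSucc, Fin.val_last]
  rw [if_neg (by omega)]
  simp

lemma prefixTrue_snoc_last {n : ℕ} (g : Fin n → Bool) (b : Bool) :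
    prefixTrue (Fin.snoc g b) (n + 1) = prefixTrue g n + (if b then 1 else 0) := by
  rw [prefixTrue_eq_sum, prefixTrue_eq_sum, Fin.sum_univ_castSucc]
  simp only [Fin.snoc_castSucc, Fin.snoc_last, Fin.coe_castSucc, Fin.val_last]
  congr 1
  · apply Finset.sum_congr rfl
    intro s _
    have h1 : s.val < n + 1 := Nat.lt_succ_of_lt s.isLt
    have h2 : s.val < n := s.isLt
    simp [h1, h2]
  · cases b <;> simp

lemma prefixTrue_mono {m : ℕ} (f : Fin m → Bool) {t u : ℕ} (h : t ≤ u) :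
    prefixTrue f t ≤ prefixTrue f u := by
  apply Finset.card_le_card
  intro s hs
  simp only [Finset.mem_filter] at *
  exact ⟨hs.1, lt_of_lt_of_le hs.2.1 h, hs.2.2⟩

lemma sum_ind_lt (n t : ℕ) (ht : t ≤ n) :
    (∑ s : Fin n, if s.val < t then 1 else 0) = t := by
  rw [Fin.sum_univ_eq_sum_range (fun j => if j < t then 1 else 0), ← Finset.card_filter]
  have : (Finset.range n).filter (fun j => j < t) = Finset.range t := by
    ext j; simp only [Finset.mem_filter, Finset.mem_range]; omega
  rw [this, Finset.card_range]

lemma prefixTrue_le {m : ℕ} (f : Fin m → Bool) (t : ℕ) (ht : t ≤ m) :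
    prefixTrue f t ≤ t := by
  rw [prefixTrue_eq_sum]
  calc (∑ s : Fin m, if s.val < t ∧ f s = true then 1 else 0)
      ≤ ∑ s : Fin m, if s.val < t then 1 else 0 := by
        apply Finset.sum_le_sum
        intro s _
        by_cases hs : s.val < t <;> cases hfs : f s <;> simp [hs, hfs]
    _ = t := sum_ind_lt m t ht

lemma prefixTrue_not {m : ℕ} (f : Fin m → Bool) (t : ℕ) (ht : t ≤ m) :
    prefixTrue (fun s => !(f s)) t = t - prefixTrue f t := by
  have h : prefixTrue (fun s => !(f s)) t + prefixTrue f t = t := by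
    rw [prefixTrue_eq_sum, prefixTrue_eq_sum, ← Finset.sum_add_distrib]
    conv_rhs => rw [← sum_ind_lt m t ht]
    apply Finset.sum_congr rfl
    intro s _
    by_cases hs : s.val < t <;> cases hfs : f s <;> simp [hs, hfs]
  omega

/-- touch count -/
def touches {m : ℕ} (f : Fin m → Bool) : ℕ :=
  ((Finset.range (m + 1)).filter (fun t => 0 < t ∧ 2 * prefixTrue f t = t)).card

/-- general path count -/
def A (n k i : ℕ) : ℕ :=
  (Finset.univ.filter (fun f : Fin n → Bool =>
    prefixTrue f n = k ∧ touches f = i)).card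

lemma touches_snoc {n : ℕ} (g : Fin n → Bool) (b : Bool) :
    touches (Fin.snoc g b : Fin (n+1) → Bool) =
      touches g + (if 2 * prefixTrue (Fin.snoc g b : Fin (n+1) → Bool) (n+1) = n+1 then 1 else 0) := by
  unfold touches
  rw [Finset.range_add_one (n := n+1), Finset.filter_insert]
  have hcong : (Finset.range (n+1)).filter
      (fun t => 0 < t ∧ 2 * prefixTrue (Fin.snoc g b : Fin (n+1) → Bool) t = t)
      = (Finset.range (n+1)).filter (fun t => 0 < t ∧ 2 * prefixTrue g t = t) := by
    apply Finset.filter_congr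
    intro t htr
    rw [Finset.mem_range] at htr
    rw [prefixTrue_snoc_le g b (by omega)]
  rw [hcong]
  by_cases hd : 2 * prefixTrue (Fin.snoc g b : Fin (n+1) → Bool) (n+1) = n+1
  · rw [if_pos ⟨Nat.succ_pos n, hd⟩, if_pos hd,
      Finset.card_insert_of_notMem (by simp)]
  · rw [if_neg (by tauto), if_neg hd]
    simp [touches]

lemma A_zero_touch {n k : ℕ} (h : 2 * k = n) (hn : 0 < n) : A n k 0 = 0 := by
  unfold A
  rw [Finset.card_eq_zero, Finset.filter_eq_empty_iff]
  rintro f - ⟨h1, h2⟩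
  have : n ∈ (Finset.range (n + 1)).filter (fun t => 0 < t ∧ 2 * prefixTrue f t = t) := by
    simp only [Finset.mem_filter, Finset.mem_range]
    exact ⟨by omega, hn, by rw [h1]; omega⟩
  have := Finset.card_pos.2 ⟨n, this⟩
  unfold touches at h2
  omega

lemma A_le (n k i : ℕ) (h : n < k) : A n k i = 0 := by
  unfold A
  rw [Finset.card_eq_zero, Finset.filter_eq_empty_iff]
  rintro f - ⟨h1, h2⟩
  have := prefixTrue_le f n le_rfl
  omega

lemma A_bot (n i : ℕ) : A n 0 i = if i = 0 then 1 else 0 := by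
  unfold A
  have hset : (Finset.univ.filter (fun f : Fin n → Bool =>
      prefixTrue f n = 0 ∧ touches f = i))
      = if i = 0 then {fun _ => false} else ∅ := by
    ext f
    simp only [Finset.mem_filter, Finset.mem_univ, true_and]
    have htf : ∀ f : Fin n → Bool, prefixTrue f n = 0 → touches f = 0 := by
      intro f h0
      unfold touches
      rw [Finset.card_eq_zero, Finset.filter_eq_empty_iff]
      intro t htr
      rw [Finset.mem_range] at htr
      have : prefixTrue f t ≤ 0 := h0 ▸ prefixTrue_mono f (by omega)
      omega
    have hfalse : ∀ f : Fin n → Bool, prefixTrue f n = 0 → f = fun _ => false := by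
      intro f h0
      funext s
      unfold prefixTrue at h0
      rw [Finset.card_eq_zero, Finset.filter_eq_empty_iff] at h0
      have := h0 (Finset.mem_univ s)
      simpa [s.isLt] using this
    have hpre0 : prefixTrue (fun _ => false : Fin n → Bool) n = 0 := by
      unfold prefixTrue
      rw [Finset.card_eq_zero, Finset.filter_eq_empty_iff]
      simp
    split_ifs with hi
    · subst hi
      simp only [Finset.mem_singleton]
      constructor
      · rintro ⟨h0, -⟩; exact hfalse f h0
      · rintro rfl; exact ⟨hpre0, htf _ hpre0⟩
    · simp only [Finset.notMem_empty, iff_false]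
      rintro ⟨h0, hti⟩
      rw [htf f h0] at hti
      exact hi hti.symm
  rw [hset]
  split_ifs <;> simp

lemma A_top (n i : ℕ) : A n n i = if i = 0 then 1 else 0 := by
  unfold A
  have hset : (Finset.univ.filter (fun f : Fin n → Bool =>
      prefixTrue f n = n ∧ touches f = i))
      = if i = 0 then {fun _ => true} else ∅ := by
    ext f
    simp only [Finset.mem_filter, Finset.mem_univ, true_and]
    have htrue : ∀ f : Fin n → Bool, prefixTrue f n = n → f = fun _ => true := by
      intro f h0
      funext s
      by_contra hs
      unfold prefixTrue at h0
      have hss : (Finset.univ.filter (fun s : Fin n => s.val < n ∧ f s = true))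
          ⊆ Finset.univ.erase s := by
        intro x hx
        simp only [Finset.mem_filter] at hx
        rw [Finset.mem_erase]
        refine ⟨fun he => hs ?_, Finset.mem_univ x⟩
        rw [← he]; exact hx.2.2
      have := Finset.card_le_card hss
      rw [Finset.card_erase_of_mem (Finset.mem_univ s)] at this
      simp only [Finset.card_univ, Fintype.card_fin] at this
      have hn := s.pos
      omega
    have hpren : ∀ t, t ≤ n → prefixTrue (fun _ => true : Fin n → Bool) t = t := by
      intro t ht
      rw [prefixTrue_eq_sum]
      simpa using sum_ind_lt n t ht
    have htf : touches (fun _ => true : Fin n → Bool) = 0 := by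
      unfold touches
      rw [Finset.card_eq_zero, Finset.filter_eq_empty_iff]
      intro t htr
      rw [Finset.mem_range] at htr
      rw [hpren t (by omega)]
      omega
    split_ifs with hi
    · subst hi
      simp only [Finset.mem_singleton]
      constructor
      · rintro ⟨h0, -⟩; exact htrue f h0
      · rintro rfl; exact ⟨hpren n le_rfl, htf⟩
    · simp only [Finset.notMem_empty, iff_false]
      rintro ⟨h0, hti⟩
      rw [htrue f h0] at hti
      rw [htf] at hti
      exact hi hti.symm
  rw [hset]
  split_ifs <;> simp

lemma touches_not {n : ℕ} (f : Fin n → Bool) :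
    touches (fun s => !(f s)) = touches f := by
  unfold touches
  have hcong : ∀ t ∈ Finset.range (n+1),
      (0 < t ∧ 2 * prefixTrue (fun s => !(f s)) t = t) = (0 < t ∧ 2 * prefixTrue f t = t) := by
    intro t ht
    rw [Finset.mem_range] at ht
    have hle := prefixTrue_le f t (by omega)
    rw [prefixTrue_not f t (by omega)]
    apply propext
    constructor <;> rintro ⟨u1, u2⟩ <;> exact ⟨u1, by omega⟩
  rw [Finset.filter_congr (fun t ht => by rw [hcong t ht])]

lemma A_symm (n k i : ℕ) (hk : k ≤ n) : A n k i = A n (n - k) i := by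
  unfold A
  apply Finset.card_nbij' (i := fun f => fun s => !(f s)) (j := fun f => fun s => !(f s))
  · intro f hf
    simp only [Finset.mem_coe, Finset.mem_filter, Finset.mem_univ, true_and] at *
    obtain ⟨h1, h2⟩ := hf
    refine ⟨?_, by rw [touches_not]; exact h2⟩
    rw [prefixTrue_not f n le_rfl, h1]
  · intro f hf
    simp only [Finset.mem_coe, Finset.mem_filter, Finset.mem_univ, true_and] at *
    obtain ⟨h1, h2⟩ := hf
    refine ⟨?_, by rw [touches_not]; exact h2⟩
    rw [prefixTrue_not f n le_rfl, h1]
    omega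
  · intro f _; funext s; simp
  · intro f _; funext s; simp

lemma A_rec (n k i : ℕ) :
    A (n+1) (k+1) ((if 2*(k+1) = n+1 then 1 else 0) + i) = A n k i + A n (k+1) i := by
  set d := if 2*(k+1) = n+1 then 1 else 0 with hd
  have key : ∀ f : Fin (n+1) → Bool, prefixTrue f (n+1) = k+1 →
      touches f = touches (Fin.init f) + d ∧
      prefixTrue (Fin.init f) n + (if f (Fin.last n) then 1 else 0) = k + 1 := by
    intro f hpre
    have hf : f = Fin.snoc (Fin.init f) (f (Fin.last n)) := (Fin.snoc_init_self f).symm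
    constructor
    · conv_lhs => rw [hf]
      rw [touches_snoc]
      congr 1
      rw [← hf, hpre, hd]
    · rw [← prefixTrue_snoc_last (Fin.init f) (f (Fin.last n)), ← hf, hpre]
  unfold A
  rw [← Finset.card_filter_add_card_filter_not
    (s := Finset.univ.filter (fun f : Fin (n+1) → Bool =>
      prefixTrue f (n+1) = k+1 ∧ touches f = d + i))
    (p := fun f => f (Fin.last n) = true), Finset.filter_filter, Finset.filter_filter]
  congr 1
  · -- true branch : card = A n k i card
    apply Finset.card_nbij' (i := fun f => Fin.init f)
      (j := fun g => Fin.snoc g true)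
    · intro f hf
      simp only [Finset.mem_coe, Finset.mem_filter, Finset.mem_univ, true_and] at *
      obtain ⟨⟨h1, h2⟩, h3⟩ := hf
      obtain ⟨k1, k2⟩ := key f h1
      rw [h3] at k2
      simp only [if_true] at k2
      refine ⟨by omega, by omega⟩
    · intro g hg
      simp only [Finset.mem_coe, Finset.mem_filter, Finset.mem_univ, true_and] at *
      obtain ⟨h1, h2⟩ := hg
      have hpre : prefixTrue (Fin.snoc g true : Fin (n+1) → Bool) (n+1) = k + 1 := by
        rw [prefixTrue_snoc_last, h1]; simp
      obtain ⟨k1, k2⟩ := key _ hpre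
      rw [Fin.init_snoc] at k1
      exact ⟨⟨hpre, by omega⟩, Fin.snoc_last _ _⟩
    · intro f hf
      simp only [Finset.mem_coe, Finset.mem_filter, Finset.mem_univ, true_and] at hf
      rw [← hf.2]
      exact Fin.snoc_init_self f
    · intro g _
      exact Fin.init_snoc _ _
  · -- false branch : card = A n (k+1) i card
    apply Finset.card_nbij' (i := fun f => Fin.init f)
      (j := fun g => Fin.snoc g false)
    · intro f hf
      simp only [Finset.mem_coe, Finset.mem_filter, Finset.mem_univ, true_and] at *
      obtain ⟨⟨h1, h2⟩, h3⟩ := hf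
      obtain ⟨k1, k2⟩ := key f h1
      rw [Bool.not_eq_true] at h3
      rw [h3] at k2
      simp at k2
      refine ⟨by omega, by omega⟩
    · intro g hg
      simp only [Finset.mem_coe, Finset.mem_filter, Finset.mem_univ, true_and] at *
      obtain ⟨h1, h2⟩ := hg
      have hpre : prefixTrue (Fin.snoc g false : Fin (n+1) → Bool) (n+1) = k + 1 := by
        rw [prefixTrue_snoc_last, h1]; simp
      obtain ⟨k1, k2⟩ := key _ hpre
      rw [Fin.init_snoc] at k1
      refine ⟨⟨hpre, by omega⟩, by simp [Fin.snoc_last]⟩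
    · intro f hf
      simp only [Finset.mem_coe, Finset.mem_filter, Finset.mem_univ, true_and] at hf
      have h3 := hf.2
      rw [Bool.not_eq_true] at h3
      rw [← h3]
      exact Fin.snoc_init_self f
    · intro g _
      exact Fin.init_snoc _ _

/-- Closed form -/
noncomputable def F (a b i : ℕ) : ℚ :=
  if a = 0 then (if i = 0 then 1 else 0)
  else 2 ^ i * ((a : ℚ) - (b : ℚ) + (i : ℚ)) * (Nat.choose (a + b - i) a : ℚ)
    / ((a : ℚ) + (b : ℚ) - (i : ℚ))

lemma F_base0 (a i : ℕ) : F a 0 i = if i = 0 then 1 else 0 := by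
  by_cases ha : a = 0
  · simp [F, ha]
  · unfold F
    rw [if_neg ha]
    by_cases hi : i = 0
    · subst hi
      rw [if_pos rfl, Nat.add_zero, Nat.sub_zero, Nat.choose_self]
      have ha' : (a : ℚ) ≠ 0 := Nat.cast_ne_zero.mpr ha
      push_cast
      field_simp
      simp [ha']
    · rw [if_neg hi]
      have hz : Nat.choose (a + 0 - i) a = 0 := Nat.choose_eq_zero_of_lt (by omega)
      rw [hz]
      push_cast
      ring

lemma F_diag0 (a : ℕ) : F (a+1) (a+1) 0 = 0 := by
  unfold F
  rw [if_neg (by omega)]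
  push_cast
  ring

lemma F_diag (a j : ℕ) : F (a+1) (a+1) (j+1) = 2 * F (a+1) a j := by
  unfold F
  rw [if_neg (by omega), if_neg (by omega)]
  rw [show (a+1) + (a+1) - (j+1) = (a+1) + a - j by omega]
  push_cast
  ring

lemma F_offdiag (a b i : ℕ) (ha : 1 ≤ a) (hba : b + 1 ≤ a) :
    F (a+1) (b+1) i = F a (b+1) i + F (a+1) b i := by
  unfold F
  rw [if_neg (by omega), if_neg (by omega), if_neg (by omega)]
  by_cases hi : i ≤ b + 1
  · set m := a + b + 1 - i with hm
    rw [show (a+1) + (b+1) - i = m + 1 by omega, show a + (b+1) - i = m by omega,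
      show (a+1) + b - i = m by omega]
    rw [Nat.choose_succ_succ m a]
    have hrel := Nat.choose_succ_right_eq m a
    rw [show m - a = b + 1 - i by omega] at hrel
    have hrelQ : (Nat.choose m (a+1) : ℚ) * ((a:ℚ)+1) = (Nat.choose m a : ℚ) * ((b:ℚ) + 1 - (i:ℚ)) := by
      have hc := congrArg (Nat.cast : ℕ → ℚ) hrel
      push_cast [Nat.cast_sub (show i ≤ b + 1 from hi)] at hc
      linarith [hc]
    have hiQ : (i:ℚ) ≤ (b:ℚ) + 1 := by exact_mod_cast hi
    have haQ : (1:ℚ) ≤ (a:ℚ) := by exact_mod_cast ha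
    have h1 : ((a:ℚ)+1) + ((b:ℚ)+1) - (i:ℚ) ≠ 0 := by
      apply ne_of_gt; linarith
    have h2 : (a:ℚ) + ((b:ℚ)+1) - (i:ℚ) ≠ 0 := by
      apply ne_of_gt; linarith
    have h3 : ((a:ℚ)+1) + (b:ℚ) - (i:ℚ) ≠ 0 := by
      apply ne_of_gt; linarith
    push_cast
    rw [div_add_div _ _ h2 h3, div_eq_div_iff h1 (mul_ne_zero h2 h3)]
    linear_combination (-2 * (2:ℚ)^i * ((a:ℚ) + (b:ℚ) + 1 - (i:ℚ))) * hrelQ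
  · have z1 : Nat.choose ((a+1) + (b+1) - i) (a+1) = 0 := Nat.choose_eq_zero_of_lt (by omega)
    have z2 : Nat.choose (a + (b+1) - i) a = 0 := Nat.choose_eq_zero_of_lt (by omega)
    have z3 : Nat.choose ((a+1) + b - i) (a+1) = 0 := Nat.choose_eq_zero_of_lt (by omega)
    rw [z1, z2, z3]
    push_cast
    ring

/-- `nPaths k l i` is the number of lattice paths from `(0,0)` to `(k,l)` with unit steps
`(1,0)` and `(0,1)` that pass through exactly `i` diagonal points `(j,j)` with `j > 0`.
A path is encoded as `f : Fin (k+l) → Bool`, `true` meaning a `(1,0)` step. -/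
def nPaths (k l i : ℕ) : ℕ :=
  (Finset.univ.filter (fun f : Fin (k + l) → Bool =>
    prefixTrue f (k + l) = k ∧
    ((Finset.range (k + l + 1)).filter
      (fun t => 0 < t ∧ 2 * prefixTrue f t = t)).card = i)).card

lemma main_count : ∀ N a b i, a + b ≤ N → b ≤ a → (A (a+b) a i : ℚ) = F a b i := by
  intro N
  induction N with
  | zero =>
    intro a b i hN hba
    have ha : a = 0 := by omega
    have hb : b = 0 := by omega
    subst ha; subst hb
    rw [A_top, F_base0]
    split_ifs <;> simp
  | succ N ih =>
    intro a b i hN hba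
    match b, hba with
    | 0, _ =>
      rw [Nat.add_zero, show A a a i = if i = 0 then 1 else 0 from A_top a i, F_base0]
      split_ifs <;> simp
    | b'+1, hba =>
      rcases Nat.lt_or_ge (b'+1) a with hlt | hge
      · -- off-diagonal: b'+1 < a, a = a'+1
        obtain ⟨a', rfl⟩ : ∃ a', a = a' + 1 := ⟨a - 1, by omega⟩
        have hb'a : b' + 1 ≤ a' := by omega
        have ha' : 1 ≤ a' := by omega
        rw [show (a'+1) + (b'+1) = (a'+b'+1) + 1 by omega]
        have hrec := A_rec (a'+b'+1) a' i
        rw [if_neg (by omega), Nat.zero_add] at hrec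
        rw [hrec]
        push_cast
        rw [show a'+b'+1 = a' + (b'+1) by omega] at *
        have e1 : (A (a' + (b'+1)) a' i : ℚ) = F a' (b'+1) i :=
          ih a' (b'+1) i (by omega) hb'a
        have e2 : (A (a' + (b'+1)) (a'+1) i : ℚ) = F (a'+1) b' i := by
          rw [show a' + (b'+1) = (a'+1) + b' by omega]
          exact ih (a'+1) b' i (by omega) (by omega)
        rw [e1, e2, F_offdiag a' b' i ha' hb'a]
      · -- diagonal: a = b'+1
        have ha : a = b' + 1 := by omega
        subst ha
        cases i with
        | zero =>
          rw [A_zero_touch (by omega) (by omega), F_diag0]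
          simp
        | succ j =>
          rw [show (b'+1) + (b'+1) = (2*b'+1) + 1 by omega]
          have hrec := A_rec (2*b'+1) b' j
          rw [if_pos (by omega)] at hrec
          rw [show j + 1 = 1 + j by omega, hrec]
          have hsym : A (2*b'+1) b' j = A (2*b'+1) (b'+1) j := by
            rw [A_symm (2*b'+1) b' j (by omega), show 2*b'+1 - b' = b'+1 by omega]
          rw [hsym]
          have e1 : (A (2*b'+1) (b'+1) j : ℚ) = F (b'+1) b' j := by
            rw [show 2*b'+1 = (b'+1) + b' by omega]
            exact ih (b'+1) b' j (by omega) (by omega)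
          push_cast
          rw [e1, show 1+j = j+1 from Nat.add_comm 1 j, F_diag b' j]
          ring

theorem nPaths_eq (k l i : ℕ) : nPaths k l i = A (k + l) k i := rfl

/-- The number of lattice paths from (0,0) to (k,k) passing through exactly `i` diagonal
points `(j,j)` with `j > 0` equals `i·2^i·C(2k-i,k)/(2k-i)`, for `1 ≤ i ≤ k`. -/
theorem grand_dyck_count (k i : ℕ) (h1 : 1 ≤ i) (h2 : i ≤ k) :
    (nPaths k k i : ℚ) = (i : ℚ) * 2 ^ i * (Nat.choose (2 * k - i) k : ℚ) / ((2 * k - i : ℕ) : ℚ) := by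
  rw [nPaths_eq, main_count (k+k) k k i le_rfl le_rfl]
  unfold F
  rw [if_neg (by omega), show k + k - i = 2*k - i by omega,
    Nat.cast_sub (show i ≤ 2*k by omega)]
  push_cast
  ring
end

section
/- For k > ℓ ≥ 0 and 0 ≤ i ≤ ℓ, the number of lattice paths from (0,0) to (k,ℓ) using steps (1,0) and (0,1) containing exactly i diagonal points (j,j) with j>0 equals (k-ℓ+i)·2^i·C(k+ℓ-i, k)/(k+ℓ-i). -/
/-- Number of diagonal touches of a path encoded by `f : Fin m → Bool`. -/
def touchCard (m : ℕ) (f : Fin m → Bool) : ℕ :=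
  ((Finset.range (m + 1)).filter (fun t => 0 < t ∧ 2 * prefixTrue f t = t)).card

/-- Paths of length `m` with `K` trues and `i` touches. -/
def pathCount (m K i : ℕ) : ℕ :=
  (Finset.univ.filter (fun f : Fin m → Bool =>
    prefixTrue f m = K ∧ touchCard m f = i)).card

lemma nPaths_eq_pathCount (k l i : ℕ) : nPaths k l i = pathCount (k + l) k i := rfl

lemma prefixTrue_zero {m : ℕ} (f : Fin m → Bool) : prefixTrue f 0 = 0 := by
  simp [prefixTrue]

lemma prefixTrue_succ {m : ℕ} (f : Fin m → Bool) (t : ℕ) (ht : t < m) :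
    prefixTrue f (t + 1) = prefixTrue f t + (if f ⟨t, ht⟩ = true then 1 else 0) := by
  classical
  have key : ∀ s : Fin m,
      (if s.val < t + 1 ∧ f s = true then 1 else 0) =
      (if s.val < t ∧ f s = true then 1 else 0) +
      (if s = ⟨t, ht⟩ then (if f ⟨t, ht⟩ = true then 1 else 0) else 0) := by
    intro s
    by_cases hs : s = ⟨t, ht⟩
    · subst hs
      have h1 : ¬ ((⟨t, ht⟩ : Fin m).val < t) := by simp
      by_cases hf : f ⟨t, ht⟩ = true <;> simp [h1, hf]
    · have hv : s.val ≠ t := by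
        intro h; exact hs (Fin.ext h)
      have h3 : (s.val < t + 1) ↔ (s.val < t) := by omega
      simp [hs, h3]
  unfold prefixTrue
  rw [Finset.card_filter, Finset.card_filter,
    Finset.sum_congr rfl fun s _ => key s, Finset.sum_add_distrib,
    Finset.sum_ite_eq' Finset.univ, if_pos (Finset.mem_univ _)]

lemma prefixTrue_add_not {m : ℕ} (f : Fin m → Bool) :
    ∀ t, t ≤ m → prefixTrue f t + prefixTrue (fun s => !(f s)) t = t := by
  intro t
  induction t with
  | zero => intro _; simp [prefixTrue_zero]
  | succ t ih =>
    intro ht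
    have htm : t < m := ht
    rw [prefixTrue_succ f t htm, prefixTrue_succ (fun s => !(f s)) t htm]
    have hih := ih (le_of_lt htm)
    by_cases hf : f ⟨t, htm⟩ = true <;> simp [hf] <;> omega

lemma prefixTrue_snoc {m : ℕ} (g : Fin m → Bool) (b : Bool) :
    ∀ t, t ≤ m → prefixTrue (Fin.snoc g b) t = prefixTrue g t := by
  intro t
  induction t with
  | zero => intro _; simp [prefixTrue_zero]
  | succ t ih =>
    intro ht
    have htm : t < m := ht
    have htm' : t < m + 1 := by omega
    rw [prefixTrue_succ _ t htm', prefixTrue_succ g t htm, ih (le_of_lt htm)]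
    have hcast : (⟨t, htm'⟩ : Fin (m + 1)) = Fin.castSucc ⟨t, htm⟩ := rfl
    rw [hcast, Fin.snoc_castSucc]

lemma prefixTrue_snoc_top {m : ℕ} (g : Fin m → Bool) (b : Bool) :
    prefixTrue (Fin.snoc g b) (m + 1) = prefixTrue g m + (if b = true then 1 else 0) := by
  rw [prefixTrue_succ _ m (by omega), prefixTrue_snoc g b m le_rfl]
  have hl : (⟨m, by omega⟩ : Fin (m + 1)) = Fin.last m := rfl
  rw [hl, Fin.snoc_last]

lemma touchCard_snoc {m : ℕ} (g : Fin m → Bool) (b : Bool) :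
    touchCard (m + 1) (Fin.snoc g b) =
      touchCard m g + (if 2 * prefixTrue (Fin.snoc g b) (m + 1) = m + 1 then 1 else 0) := by
  classical
  unfold touchCard
  rw [Finset.range_add_one, Finset.filter_insert]
  have hfc : (Finset.range (m + 1)).filter
        (fun t => 0 < t ∧ 2 * prefixTrue (Fin.snoc g b) t = t)
      = (Finset.range (m + 1)).filter (fun t => 0 < t ∧ 2 * prefixTrue g t = t) := by
    apply Finset.filter_congr
    intro t htm
    have ht : t ≤ m := by
      simp only [Finset.mem_range] at htm; omega
    rw [prefixTrue_snoc g b t ht]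
  have hpos : (0 < m + 1) := Nat.succ_pos m
  by_cases hd : 2 * prefixTrue (Fin.snoc g b) (m + 1) = m + 1
  · rw [if_pos ⟨hpos, hd⟩, if_pos hd, Finset.card_insert_of_notMem, hfc]
    intro hmem
    have := Finset.mem_of_mem_filter _ hmem
    simp at this
  · have : ¬ (0 < m + 1 ∧ 2 * prefixTrue (Fin.snoc g b) (m + 1) = m + 1) := by
      intro h; exact hd h.2
    rw [if_neg this, if_neg hd, hfc]
    simp

lemma card_last (m k i j : ℕ) (b : Bool) (K : ℕ)
    (hK : K = (if b = true then 1 else 0) + k)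
    (hj : j = i + (if 2 * K = m + 1 then 1 else 0)) :
    (Finset.univ.filter (fun f : Fin (m + 1) → Bool =>
      (prefixTrue f (m + 1) = K ∧ touchCard (m + 1) f = j) ∧ f (Fin.last m) = b)).card
      = pathCount m k i := by
  classical
  unfold pathCount
  refine Finset.card_bij' (fun f _ => Fin.init f) (fun g _ => Fin.snoc g b) ?hi ?hj ?li ?ri
  case hi =>
    intro f hf
    simp only [Finset.mem_filter, Finset.mem_univ, true_and] at hf ⊢
    obtain ⟨⟨hp, htc⟩, hlast⟩ := hf
    have hsnoc : Fin.snoc (Fin.init f) b = f := by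
      rw [← hlast]; exact Fin.snoc_init_self f
    constructor
    · have h1 := prefixTrue_snoc_top (Fin.init f) b
      rw [hsnoc, hp] at h1
      cases b <;> simp at h1 hK <;> omega
    · have h2 := touchCard_snoc (Fin.init f) b
      rw [hsnoc, hp] at h2
      by_cases hd : 2 * K = m + 1 <;> simp [hd] at h2 hj <;> omega
  case hj =>
    intro g hg
    simp only [Finset.mem_filter, Finset.mem_univ, true_and] at hg ⊢
    obtain ⟨hp, htc⟩ := hg
    have hptop : prefixTrue (Fin.snoc g b) (m + 1) = K := by
      rw [prefixTrue_snoc_top g b, hp]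
      cases b <;> simp at hK ⊢ <;> omega
    refine ⟨⟨hptop, ?_⟩, ?_⟩
    · rw [touchCard_snoc g b, hptop, htc, hj]
    · simp
  case li =>
    intro f hf
    simp only [Finset.mem_filter, Finset.mem_univ, true_and] at hf
    show Fin.snoc (Fin.init f) b = f
    rw [← hf.2]
    exact Fin.snoc_init_self f
  case ri =>
    intro g _
    simp only [Fin.init_snoc]

lemma pathCount_split (m K i : ℕ) :
    pathCount (m + 1) K i =
      (Finset.univ.filter (fun f : Fin (m + 1) → Bool =>
        (prefixTrue f (m + 1) = K ∧ touchCard (m + 1) f = i) ∧ f (Fin.last m) = true)).card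
      + (Finset.univ.filter (fun f : Fin (m + 1) → Bool =>
        (prefixTrue f (m + 1) = K ∧ touchCard (m + 1) f = i) ∧ f (Fin.last m) = false)).card := by
  classical
  unfold pathCount
  rw [← Finset.card_filter_add_card_filter_not
    (p := fun f : Fin (m + 1) → Bool => f (Fin.last m) = true), Finset.filter_filter,
    Finset.filter_filter]
  congr 1
  congr 1
  apply Finset.filter_congr
  intro f _
  simp only [Bool.not_eq_true]

lemma pathCount_compl (m K K' i : ℕ) (h : K + K' = m) :
    pathCount m K i = pathCount m K' i := by
  classical
  unfold pathCount
  have htouch : ∀ f : Fin m → Bool, touchCard m (fun s => !(f s)) = touchCard m f := by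
    intro f
    unfold touchCard
    congr 1
    apply Finset.filter_congr
    intro t htm
    have ht : t ≤ m := by simp only [Finset.mem_range] at htm; omega
    have hsum := prefixTrue_add_not f t ht
    omega
  refine Finset.card_bij' (fun f _ => fun s => !(f s)) (fun f _ => fun s => !(f s))
    ?hi ?hj ?li ?ri
  case hi =>
    intro f hf
    simp only [Finset.mem_filter, Finset.mem_univ, true_and] at hf ⊢
    obtain ⟨hp, ht⟩ := hf
    have hsum := prefixTrue_add_not f m le_rfl
    exact ⟨by omega, by rw [htouch f]; exact ht⟩
  case hj =>
    intro f hf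
    simp only [Finset.mem_filter, Finset.mem_univ, true_and] at hf ⊢
    obtain ⟨hp, ht⟩ := hf
    have hsum := prefixTrue_add_not f m le_rfl
    exact ⟨by omega, by rw [htouch f]; exact ht⟩
  case li => intro f _; show (fun s => !(!(f s))) = f; funext s; simp
  case ri => intro f _; show (fun s => !(!(f s))) = f; funext s; simp

lemma prefixTrue_all {m : ℕ} (f : Fin m → Bool) (h : prefixTrue f m = m) (s : Fin m) :
    f s = true := by
  by_contra hs
  have hsub : Finset.univ.filter (fun s' : Fin m => s'.val < m ∧ f s' = true)
      ⊆ Finset.univ.erase s := by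
    intro x hx
    simp only [Finset.mem_filter] at hx
    refine Finset.mem_erase.2 ⟨?_, Finset.mem_univ _⟩
    rintro rfl
    exact hs hx.2.2
  have hle := Finset.card_le_card hsub
  rw [Finset.card_erase_of_mem (Finset.mem_univ s)] at hle
  unfold prefixTrue at h
  rw [h] at hle
  simp only [Finset.card_univ, Fintype.card_fin] at hle
  have hm : 0 < m := s.pos
  omega

lemma prefixTrue_true {m : ℕ} : ∀ t, t ≤ m → prefixTrue (fun _ : Fin m => true) t = t := by
  intro t
  induction t with
  | zero => intro _; exact prefixTrue_zero _
  | succ t ih =>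
    intro ht
    rw [prefixTrue_succ _ t ht, ih (by omega)]
    simp

lemma nPaths_base (k i : ℕ) : nPaths k 0 i = if i = 0 then 1 else 0 := by
  classical
  rw [nPaths_eq_pathCount, Nat.add_zero]
  unfold pathCount
  have htouchT : touchCard k (fun _ : Fin k => true) = 0 := by
    unfold touchCard
    rw [Finset.card_eq_zero, Finset.filter_eq_empty_iff]
    intro t htm
    simp only [Finset.mem_range] at htm
    rw [prefixTrue_true t (by omega)]
    omega
  have hmem : ∀ f : Fin k → Bool,
      (prefixTrue f k = k ∧ touchCard k f = i) ↔ (f = fun _ => true) ∧ i = 0 := by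
    intro f
    constructor
    · rintro ⟨hp, ht⟩
      have hall : f = fun _ => true := funext fun s => prefixTrue_all f hp s
      refine ⟨hall, ?_⟩
      rw [hall, htouchT] at ht
      omega
    · rintro ⟨hf, hi⟩
      subst hf; subst hi
      exact ⟨prefixTrue_true k le_rfl, htouchT⟩
  by_cases hi : i = 0
  · subst hi
    rw [show (Finset.univ.filter (fun f : Fin k → Bool =>
        prefixTrue f k = k ∧ touchCard k f = 0)) = {fun _ => true} from ?_]
    · simp
    · ext f
      simp only [Finset.mem_filter, Finset.mem_univ, true_and, Finset.mem_singleton]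
      rw [hmem f]
      simp
  · rw [Finset.filter_eq_empty_iff.2 ?_]
    · simp [hi]
    · intro f _
      rw [hmem f]
      simp [hi]

lemma nPaths_diag_zero (c : ℕ) : nPaths (c + 1) (c + 1) 0 = 0 := by
  classical
  have hm : (c + 1) + (c + 1) = 2 * c + 2 := by omega
  rw [nPaths_eq_pathCount, hm]
  unfold pathCount
  rw [Finset.card_eq_zero, Finset.filter_eq_empty_iff]
  intro f _
  rintro ⟨hp, ht⟩
  have hmem : (2 * c + 2) ∈ (Finset.range (2 * c + 2 + 1)).filter
      (fun t => 0 < t ∧ 2 * prefixTrue f t = t) := by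
    rw [Finset.mem_filter, Finset.mem_range, hp]
    omega
  unfold touchCard at ht
  rw [Finset.card_eq_zero] at ht
  rw [ht] at hmem
  exact absurd hmem (Finset.notMem_empty _)

lemma nPaths_rec_off (a c i : ℕ) (hne : a ≠ c) :
    nPaths (a + 1) (c + 1) i = nPaths a (c + 1) i + nPaths (a + 1) c i := by
  classical
  have hm : (a + 1) + (c + 1) = (a + c + 1) + 1 := by omega
  rw [nPaths_eq_pathCount, hm, pathCount_split]
  have hK1 : (a + 1) = (if true = true then 1 else 0) + a := by simp [Nat.add_comm]
  have hK2 : (a + 1) = (if false = true then 1 else 0) + (a + 1) := by simp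
  have hcond : ¬ (2 * (a + 1) = (a + c + 1) + 1) := by omega
  have hj1 : i = i + (if 2 * (a + 1) = (a + c + 1) + 1 then 1 else 0) := by
    simp [hcond]
  have ha1 : a + (c + 1) = a + c + 1 := by omega
  have ha2 : (a + 1) + c = a + c + 1 := by omega
  have h1 := card_last (a + c + 1) a i i true (a + 1) hK1 hj1
  have h2 := card_last (a + c + 1) (a + 1) i i false (a + 1) hK2 hj1
  rw [h1, h2]
  have e1 : pathCount (a + c + 1) a i = nPaths a (c + 1) i := by
    rw [nPaths_eq_pathCount, ha1]
  have e2 : pathCount (a + c + 1) (a + 1) i = nPaths (a + 1) c i := by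
    rw [nPaths_eq_pathCount, ha2]
  rw [e1, e2]

lemma nPaths_diag_succ (c i : ℕ) :
    nPaths (c + 1) (c + 1) (i + 1) = nPaths c (c + 1) i + nPaths (c + 1) c i := by
  classical
  have hm : (c + 1) + (c + 1) = (2 * c + 1) + 1 := by omega
  rw [nPaths_eq_pathCount, hm, pathCount_split]
  have hK1 : (c + 1) = (if true = true then 1 else 0) + c := by simp [Nat.add_comm]
  have hK2 : (c + 1) = (if false = true then 1 else 0) + (c + 1) := by simp
  have hcond : 2 * (c + 1) = (2 * c + 1) + 1 := by omega
  have hj1 : i + 1 = i + (if 2 * (c + 1) = (2 * c + 1) + 1 then 1 else 0) := by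
    simp [hcond]
  have hb1 : c + (c + 1) = 2 * c + 1 := by omega
  have hb2 : (c + 1) + c = 2 * c + 1 := by omega
  have h1 := card_last (2 * c + 1) c i (i + 1) true (c + 1) hK1 hj1
  have h2 := card_last (2 * c + 1) (c + 1) i (i + 1) false (c + 1) hK2 hj1
  rw [h1, h2]
  have e1 : pathCount (2 * c + 1) c i = nPaths c (c + 1) i := by
    rw [nPaths_eq_pathCount, hb1]
  have e2 : pathCount (2 * c + 1) (c + 1) i = nPaths (c + 1) c i := by
    rw [nPaths_eq_pathCount, hb2]
  rw [e1, e2]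

lemma nPaths_symm (c i : ℕ) : nPaths c (c + 1) i = nPaths (c + 1) c i := by
  have hb : c + (c + 1) = (c + 1) + c := by omega
  rw [nPaths_eq_pathCount, nPaths_eq_pathCount, hb]
  exact pathCount_compl ((c + 1) + c) c (c + 1) i (by omega)

/-- The closed form. -/
noncomputable def Fq (k l i : ℕ) : ℚ :=
  ((k - l + i : ℕ) : ℚ) * 2 ^ i * (Nat.choose (k + l - i) k : ℚ) / ((k + l - i : ℕ) : ℚ)

lemma Fq_base (k i : ℕ) (hk : 1 ≤ k) : Fq k 0 i = if i = 0 then 1 else 0 := by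
  unfold Fq
  by_cases hi : i = 0
  · subst hi
    simp only [Nat.sub_zero, Nat.add_zero, Nat.choose_self, Nat.cast_one, pow_zero,
      mul_one, if_pos rfl]
    have : (k : ℚ) ≠ 0 := Nat.cast_ne_zero.2 (by omega)
    field_simp
    simp
  · rw [Nat.choose_eq_zero_of_lt (by omega)]
    simp [hi]

lemma Fq_diag_zero (c : ℕ) : Fq (c + 1) (c + 1) 0 = 0 := by
  unfold Fq
  simp

lemma Fq_diag_succ (c i : ℕ) : Fq (c + 1) (c + 1) (i + 1) = 2 * Fq (c + 1) c i := by
  unfold Fq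
  have e1 : (c + 1) - (c + 1) + (i + 1) = i + 1 := by omega
  have e2 : (c + 1) + (c + 1) - (i + 1) = 2 * c + 1 - i := by omega
  have e3 : (c + 1) - c + i = i + 1 := by omega
  have e4 : (c + 1) + c - i = 2 * c + 1 - i := by omega
  rw [e1, e2, e3, e4]
  push_cast
  ring

lemma Fq_rec (a c i : ℕ) (h : c < a) :
    Fq (a + 1) (c + 1) i = Fq a (c + 1) i + Fq (a + 1) c i := by
  rcases lt_trichotomy i (c + 1) with hi | hi | hi
  · -- main case: i ≤ c
    obtain ⟨j, rfl⟩ : ∃ j, c = i + j := ⟨c - i, by omega⟩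
    obtain ⟨e, rfl⟩ : ∃ e, a = i + j + e + 1 := ⟨a - (i + j) - 1, by omega⟩
    unfold Fq
    have e1 : (i + j + e + 1 + 1) - (i + j + 1) + i = e + 1 + i := by omega
    have e2 : (i + j + e + 1 + 1) + (i + j + 1) - i = (2 * j + e + i + 2) + 1 := by omega
    have e3 : (i + j + e + 1) - (i + j + 1) + i = e + i := by omega
    have e4 : (i + j + e + 1) + (i + j + 1) - i = 2 * j + e + i + 2 := by omega
    have e5 : (i + j + e + 1 + 1) - (i + j) + i = e + 2 + i := by omega
    have e6 : (i + j + e + 1 + 1) + (i + j) - i = 2 * j + e + i + 2 := by omega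
    rw [e1, e2, e3, e4, e5, e6]
    have hpas : Nat.choose ((2 * j + e + i + 2) + 1) (i + j + e + 1 + 1)
        = Nat.choose (2 * j + e + i + 2) (i + j + e + 1)
          + Nat.choose (2 * j + e + i + 2) (i + j + e + 1 + 1) :=
      Nat.choose_succ_succ _ _
    have hrat : Nat.choose (2 * j + e + i + 2) (i + j + e + 1 + 1) * (i + j + e + 1 + 1)
        = Nat.choose (2 * j + e + i + 2) (i + j + e + 1) * (j + 1) := by
      have h2 := Nat.choose_succ_right_eq (2 * j + e + i + 2) (i + j + e + 1)
      rw [show 2 * j + e + i + 2 - (i + j + e + 1) = j + 1 by omega] at h2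
      exact h2
    have he34 : i + j + e + 1 = i + j + e + 1 := rfl
    rw [show (i + j + e + 1 + 1 : ℕ) = i + j + e + 2 from rfl] at hpas hrat ⊢
    rw [hpas]
    have hratQ : ((Nat.choose (2 * j + e + i + 2) (i + j + e + 2) : ℕ) : ℚ) * ((i : ℚ) + j + e + 2)
        = ((Nat.choose (2 * j + e + i + 2) (i + j + e + 1) : ℕ) : ℚ) * ((j : ℚ) + 1) := by
      exact_mod_cast hrat
    have hP : ((2 * j + e + i + 2 : ℕ) : ℚ) ≠ 0 := Nat.cast_ne_zero.2 (by omega)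
    have hP1 : ((2 * j + e + i + 2 + 1 : ℕ) : ℚ) ≠ 0 := Nat.cast_ne_zero.2 (by omega)
    rw [div_add_div _ _ hP hP, div_eq_div_iff hP1 (by
      exact mul_ne_zero hP hP)]
    push_cast
    linear_combination (-((2 : ℚ) ^ i * 2 * (2 * (j : ℚ) + e + i + 2))) * hratQ
  · -- i = c + 1
    subst hi
    unfold Fq
    have e1 : (a + 1) - (c + 1) + (c + 1) = a + 1 := by omega
    have e2 : (a + 1) + (c + 1) - (c + 1) = a + 1 := by omega
    have e3 : a - (c + 1) + (c + 1) = a := by omega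
    have e4 : a + (c + 1) - (c + 1) = a := by omega
    have e5 : (a + 1) - c + (c + 1) = a + 2 := by omega
    have e6 : (a + 1) + c - (c + 1) = a := by omega
    rw [e1, e2, e3, e4, e5, e6, Nat.choose_self, Nat.choose_self,
      Nat.choose_eq_zero_of_lt (by omega)]
    have ha : (a : ℚ) ≠ 0 := Nat.cast_ne_zero.2 (by omega)
    have ha1 : ((a + 1 : ℕ) : ℚ) ≠ 0 := by positivity
    push_cast at ha1 ⊢
    field_simp
    simp
  · -- i > c + 1 : everything vanishes
    unfold Fq
    rw [Nat.choose_eq_zero_of_lt (show (a + 1) + (c + 1) - i < a + 1 by omega),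
      Nat.choose_eq_zero_of_lt (show a + (c + 1) - i < a by omega),
      Nat.choose_eq_zero_of_lt (show (a + 1) + c - i < a + 1 by omega)]
    simp

lemma main_count_s1 : ∀ n k l i, k + l ≤ n → 1 ≤ k → l ≤ k →
    (nPaths k l i : ℚ) = Fq k l i := by
  intro n
  induction n with
  | zero => intro k l i h hk _; omega
  | succ n ih =>
    intro k l i hn hk hlk
    rcases Nat.eq_zero_or_pos l with hl | hl
    · subst hl
      rw [nPaths_base, Fq_base k i hk]
      split_ifs <;> simp
    · obtain ⟨c, rfl⟩ : ∃ c, l = c + 1 := ⟨l - 1, by omega⟩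
      rcases eq_or_lt_of_le hlk with heq | hlt
      · -- diagonal case k = c + 1
        subst heq
        cases i with
        | zero => rw [nPaths_diag_zero, Fq_diag_zero]; simp
        | succ i =>
          rw [nPaths_diag_succ, nPaths_symm]
          push_cast
          rw [ih (c + 1) c i (by omega) (by omega) (by omega), Fq_diag_succ]
          ring
      · -- off-diagonal step
        obtain ⟨a, rfl⟩ : ∃ a, k = a + 1 := ⟨k - 1, by omega⟩
        rw [nPaths_rec_off a c i (by omega)]
        push_cast
        rw [ih a (c + 1) i (by omega) (by omega) (by omega),
          ih (a + 1) c i (by omega) (by omega) (by omega),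
          Fq_rec a c i (by omega)]

/-- For `k > ℓ ≥ 0` and `0 ≤ i ≤ ℓ`, the number of lattice paths from (0,0) to (k,ℓ)
containing exactly `i` diagonal points `(j,j)` with `j>0` equals
`(k-ℓ+i)·2^i·C(k+ℓ-i,k)/(k+ℓ-i)`. -/
theorem offdiag_path_count (k l i : ℕ) (hkl : k > l) (hi : i ≤ l) :
    (nPaths k l i : ℚ) =
      ((k - l + i : ℕ) : ℚ) * 2 ^ i * (Nat.choose (k + l - i) k : ℚ) / ((k + l - i : ℕ) : ℚ) := by
  have h := main_count_s1 (k + l) k l i le_rfl (by omega) (by omega)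
  rw [h]
  rfl
end

section
/- The explicit formula n(k,ℓ;i) = (|k-ℓ|+i)·2^i·C(k+ℓ-i,k)/(k+ℓ-i) satisfies the path-counting recursion: for k = ℓ > 0, n(k,k;i) = n(k-1,k;i-1) + n(k,k-1;i-1), and for k ≠ ℓ with k,ℓ > 0, n(k,ℓ;i) = n(k-1,ℓ;i) + n(k,ℓ-1;i). -/
/-- The explicit formula `n(k,ℓ;i) = (|k-ℓ|+i)·2^i·C(k+ℓ-i,k)/(k+ℓ-i)` for
`i ≤ min(k,ℓ)`, extended by `0` for `i > min(k,ℓ)`.  The binomial `C(k+ℓ-i,k)` is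
written in the paper under the convention `k ≥ ℓ`; the definition is extended to
`k < ℓ` by the symmetry `n(k,ℓ;i) = n(ℓ,k;i)`, i.e. using `C(k+ℓ-i, max k ℓ)`. -/
noncomputable def nFormula (k l i : ℕ) : ℚ :=
  if i ≤ min k l then
    ((max k l - min k l + i : ℕ) : ℚ) * 2 ^ i * (Nat.choose (k + l - i) (max k l) : ℚ)
      / ((k + l - i : ℕ) : ℚ)
  else 0


lemma nFormula_symm (k l i : ℕ) : nFormula k l i = nFormula l k i := by
  unfold nFormula
  rw [max_comm, min_comm, Nat.add_comm k l]

lemma pascalQ (N k : ℕ) (hN : 1 ≤ N) (hk : 1 ≤ k) :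
    (N.choose k : ℚ) = ((N-1).choose (k-1) : ℚ) + ((N-1).choose k : ℚ) := by
  obtain ⟨n, rfl⟩ : ∃ n, N = n + 1 := ⟨N-1, by omega⟩
  obtain ⟨m, rfl⟩ : ∃ m, k = m + 1 := ⟨k-1, by omega⟩
  rw [Nat.choose_succ_succ]
  push_cast
  ring

lemma absorbQ (N k : ℕ) (hN : 1 ≤ N) (hk : 1 ≤ k) :
    (k : ℚ) * (N.choose k : ℚ) = (N : ℚ) * ((N-1).choose (k-1) : ℚ) := by
  obtain ⟨n, rfl⟩ : ∃ n, N = n + 1 := ⟨N-1, by omega⟩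
  obtain ⟨m, rfl⟩ : ∃ m, k = m + 1 := ⟨k-1, by omega⟩
  simp only [Nat.add_sub_cancel]
  have h : (m+1) * ((n+1).choose (m+1)) = (n+1) * n.choose m := by
    rw [mul_comm]
    exact (Nat.add_one_mul_choose_eq n m).symm
  exact_mod_cast congrArg (fun x : ℕ => (x : ℚ)) h

lemma nFormula_main (k l : ℕ) (hl : 0 < l) (hkl : l < k) (i : ℕ) :
    nFormula k l i = nFormula (k-1) l i + nFormula k (l-1) i := by
  unfold nFormula
  rcases lt_or_ge l i with h | h
  · -- i > l : everything is 0
    rw [if_neg (by omega), if_neg (by omega), if_neg (by omega)]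
    ring
  rcases eq_or_lt_of_le h with rfl | hil
  · -- i = l
    rw [if_pos (by omega), if_pos (by omega), if_neg (by omega)]
    have h7 : max k i - min k i + i = k := by omega
    have h8 : max (k-1) i - min (k-1) i + i = k - 1 := by omega
    have e1 : max k i = k := by omega
    have e3 : max (k-1) i = k - 1 := by omega
    have e5 : k + i - i = k := by omega
    have e6 : k - 1 + i - i = k - 1 := by omega
    rw [h7, h8, e1, e3, e5, e6, Nat.choose_self, Nat.choose_self]
    have hk0 : (k : ℚ) ≠ 0 := by exact_mod_cast (by omega : k ≠ 0)
    have hk1 : ((k - 1 : ℕ) : ℚ) ≠ 0 := by exact_mod_cast (by omega : k - 1 ≠ 0)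
    field_simp
    simp
  · -- i < l < k : the main case
    rw [if_pos (by omega), if_pos (by omega), if_pos (by omega)]
    set N := k + l - i with hN
    have e1 : max k l = k := by omega
    have e2 : min k l = l := by omega
    have e3 : max (k-1) l = k - 1 := by omega
    have e4 : min (k-1) l = l := by omega
    have e5 : max k (l-1) = k := by omega
    have e6 : min k (l-1) = l - 1 := by omega
    have e7 : k - 1 + l - i = N - 1 := by omega
    have e8 : k + (l-1) - i = N - 1 := by omega
    have c1 : max k l - min k l + i = k - l + i := by omega
    have c2 : max (k-1) l - min (k-1) l + i = (k - l + i) - 1 := by omega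
    have c3 : max k (l-1) - min k (l-1) + i = (k - l + i) + 1 := by omega
    rw [c1, c2, c3, e1, e3, e5, e7, e8]
    have hx := pascalQ N k (by omega) (by omega)
    have hy := absorbQ N k (by omega) (by omega)
    set x := ((N-1).choose (k-1) : ℚ)
    set y := ((N-1).choose k : ℚ)
    rw [hx]
    have hNQ : ((N : ℕ) : ℚ) ≠ 0 := by exact_mod_cast (by omega : N ≠ 0)
    have hN1Q : ((N - 1 : ℕ) : ℚ) ≠ 0 := by exact_mod_cast (by omega : N - 1 ≠ 0)
    have ca : ((k - l + i : ℕ) : ℚ) = (k : ℚ) - l + i := by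
      push_cast [Nat.cast_sub hkl.le]; ring
    have cb : (((k - l + i) - 1 : ℕ) : ℚ) = (k : ℚ) - l + i - 1 := by
      push_cast [Nat.cast_sub (by omega : 1 ≤ k - l + i), Nat.cast_sub hkl.le]; ring
    have cc : (((k - l + i) + 1 : ℕ) : ℚ) = (k : ℚ) - l + i + 1 := by
      push_cast [Nat.cast_sub hkl.le]; ring
    have cN : ((N : ℕ) : ℚ) = (k : ℚ) + l - i := by
      push_cast [hN, Nat.cast_sub (by omega : i ≤ k + l)]; ring
    have cN1 : ((N - 1 : ℕ) : ℚ) = (k : ℚ) + l - i - 1 := by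
      push_cast [Nat.cast_sub (by omega : 1 ≤ N), hN, Nat.cast_sub (by omega : 1 ≤ k + l - i), Nat.cast_sub (by omega : i ≤ k + l)]; ring
    rw [hx] at hy
    rw [cN] at hy
    rw [ca, cb, cc, cN, cN1]
    have d1 : (k:ℚ) + l - i ≠ 0 := by rw [← cN]; exact hNQ
    have d2 : (k:ℚ) + l - i - 1 ≠ 0 := by rw [← cN1]; exact hN1Q
    clear_value x y
    field_simp
    linear_combination (-2 : ℚ) * hy

/-- The explicit formula satisfies the path-counting recursion: on the diagonal
(`k = ℓ > 0`) the index `i` is decremented, and off the diagonal (`k ≠ ℓ`, `k,ℓ > 0`)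
it is preserved. -/
theorem nFormula_recursion :
    (∀ k : ℕ, 0 < k → ∀ i : ℕ,
        nFormula k k (i + 1) = nFormula (k - 1) k i + nFormula k (k - 1) i) ∧
    (∀ k l : ℕ, 0 < k → 0 < l → k ≠ l → ∀ i : ℕ,
        nFormula k l i = nFormula (k - 1) l i + nFormula k (l - 1) i) := by
  constructor
  · intro k hk i
    rw [show nFormula k (k-1) i = nFormula (k-1) k i from nFormula_symm k (k-1) i]
    unfold nFormula
    rcases le_or_gt (i + 1) k with h | h
    · rw [if_pos (by omega), if_pos (by omega)]
      have c1 : max k k - min k k + (i+1) = i + 1 := by omega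
      have c2 : max (k-1) k - min (k-1) k + i = i + 1 := by omega
      have e1 : max k k = k := by omega
      have e2 : max (k-1) k = k := by omega
      have e3 : k - 1 + k - i = k + k - (i+1) := by omega
      rw [c1, c2, e1, e2, e3]
      push_cast
      ring
    · rw [if_neg (by omega), if_neg (by omega)]
      ring
  · intro k l hk hl hne i
    rcases lt_or_gt_of_ne hne with hlt | hgt
    · -- k < l
      rw [nFormula_symm k l i, nFormula_symm (k-1) l i, nFormula_symm k (l-1) i,
        nFormula_main l k hk hlt i]
      ring
    · exact nFormula_main k l hl hgt i
end

section
/- For the Markov chain with transition rates q((k,ℓ),(k+1,ℓ)) = λ₁, q((k,ℓ),(k,ℓ+1)) = λ₂ for all k,ℓ ≥ 0, and q((k,ℓ),(0,0)) = μ for k ≠ ℓ, the measure π(k,ℓ) = λ₁^k λ₂^ℓ · Σ_{i=0}^{min(k,ℓ)} (|k-ℓ|+i)·2^i·C(k+ℓ-i,k) / [(k+ℓ-i)(λ₁+λ₂)^i (λ₁+λ₂+μ)^{k+ℓ-i}] (with π(0,0)=1) satisfies the global balance equations: π(0,0)(λ₁+λ₂) = μ·Σ_{k≠ℓ} π(k,ℓ);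 for k ≠ ℓ, π(k,ℓ)(λ₁+λ₂+μ) = π(k-1,ℓ)λ₁·1(k>0) + π(k,ℓ-1)λ₂·1(ℓ>0); and for k = ℓ ≥ 1, π(k,k)(λ₁+λ₂) = π(k-1,k)λ₁ + π(k,k-1)λ₂. -/
open scoped BigOperators

noncomputable def piMeasure (l1 l2 mu : ℝ) (k l : ℕ) : ℝ :=
  if k = 0 ∧ l = 0 then 1
  else
    l1 ^ k * l2 ^ l *
      ∑ i ∈ Finset.range (min k l + 1),
        ((max k l - min k l + i : ℕ) : ℝ) * 2 ^ i * (Nat.choose (k + l - i) (max k l) : ℝ) /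
          (((k + l - i : ℕ) : ℝ) * (l1 + l2) ^ i * (l1 + l2 + mu) ^ (k + l - i))

lemma piMeasure_symm (l1 l2 mu : ℝ) (k l : ℕ) :
    piMeasure l1 l2 mu k l = piMeasure l2 l1 mu l k := by
  unfold piMeasure
  by_cases h : k = 0 ∧ l = 0
  · rw [if_pos h, if_pos ⟨h.2, h.1⟩]
  · rw [if_neg h, if_neg (by tauto)]
    rw [min_comm l k, max_comm l k, add_comm l k, add_comm l2 l1,
      mul_comm (l2 ^ l) (l1 ^ k)]

lemma piMeasure_zero_zero (l1 l2 mu : ℝ) : piMeasure l1 l2 mu 0 0 = 1 := by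
  simp [piMeasure]

lemma piMeasure_nonneg {l1 l2 mu : ℝ} (h1 : 0 < l1) (h2 : 0 < l2) (hmu : 0 < mu)
    (k l : ℕ) : 0 ≤ piMeasure l1 l2 mu k l := by
  unfold piMeasure
  by_cases h : k = 0 ∧ l = 0
  · rw [if_pos h]; norm_num
  · rw [if_neg h]
    have hll : (0:ℝ) < l1 + l2 := by linarith
    have hs : (0:ℝ) < l1 + l2 + mu := by linarith
    positivity

lemma piMeasure_k0 {l1 l2 mu : ℝ} (h1 : 0 < l1) (h2 : 0 < l2) (hmu : 0 < mu)
    (k : ℕ) : piMeasure l1 l2 mu k 0 = (l1 / (l1 + l2 + mu)) ^ k := by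
  rcases Nat.eq_zero_or_pos k with hk | hk
  · subst hk; simp [piMeasure]
  have hs : (0:ℝ) < l1 + l2 + mu := by linarith
  unfold piMeasure
  rw [if_neg (by omega)]
  simp only [Nat.min_eq_right (Nat.zero_le k), Nat.max_eq_left (Nat.zero_le k)]
  rw [Finset.sum_range_one]
  simp only [Nat.sub_zero, Nat.add_zero, pow_zero, Nat.choose_self, Nat.cast_one]
  have hk' : ((k:ℝ)) ≠ 0 := by positivity
  rw [div_pow]
  field_simp

lemma choose_le_pred {m k : ℕ} (hk : 1 ≤ k) (hm : m < 2*k) :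
    Nat.choose m k ≤ Nat.choose m (k-1) := by
  have h := Nat.choose_succ_right_eq m (k-1)
  have hk1 : k - 1 + 1 = k := by omega
  rw [hk1] at h
  have hle : m - (k-1) ≤ k := by omega
  by_contra hlt
  push_neg at hlt
  nlinarith [Nat.choose_pos (le_of_lt (by omega : (0:ℕ) < 1)), h]

lemma two_mul_choose_le {m k : ℕ} (hk : 1 ≤ k) (hkm : k ≤ m) (hm : m < 2*k) :
    2 * Nat.choose m k ≤ Nat.choose (m+1) k := by
  have hp : Nat.choose (m+1) k = Nat.choose m (k-1) + Nat.choose m k := by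
    have : k - 1 + 1 = k := by omega
    conv_lhs => rw [← this, Nat.choose_succ_succ]
    rw [Nat.succ_eq_add_one, this]
  have := choose_le_pred hk hm
  omega

lemma two_pow_mul_choose_le {k l : ℕ} (hlk : l ≤ k) :
    ∀ i ≤ l, 2^i * Nat.choose (k+l-i) k ≤ Nat.choose (k+l) k := by
  intro i
  induction i with
  | zero => simp
  | succ i ih =>
    intro hi
    have hi' : i ≤ l := by omega
    have hstep : 2 * Nat.choose (k+l-(i+1)) k ≤ Nat.choose (k+l-i) k := by
      have hm : (k+l-(i+1)) + 1 = k + l - i := by omega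
      have := two_mul_choose_le (k := k) (m := k+l-(i+1)) (by omega) (by omega) (by omega)
      rwa [hm] at this
    calc 2^(i+1) * Nat.choose (k+l-(i+1)) k = 2^i * (2 * Nat.choose (k+l-(i+1)) k) := by ring
    _ ≤ 2^i * Nat.choose (k+l-i) k := Nat.mul_le_mul_left _ hstep
    _ ≤ Nat.choose (k+l) k := ih hi'

lemma choose_mul_pow_le {l1 l2 : ℝ} (h1 : 0 ≤ l1) (h2 : 0 ≤ l2) (k l : ℕ) :
    (Nat.choose (k+l) k : ℝ) * (l1^k * l2^l) ≤ (l1+l2)^(k+l) := by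
  rw [add_pow]
  have hk : k ∈ Finset.range (k+l+1) := by simp
  have := Finset.single_le_sum
    (f := fun i => l1 ^ i * l2 ^ (k + l - i) * ((k+l).choose i : ℝ))
    (fun i _ => by positivity) hk
  simpa [Nat.add_sub_cancel_left, mul_comm] using this

lemma piMeasure_le_aux {l1 l2 mu : ℝ} (h1 : 0 < l1) (h2 : 0 < l2) (hmu : 0 < mu)
    {k l : ℕ} (hlk : l ≤ k) :
    piMeasure l1 l2 mu k l ≤
      (((k:ℝ)+1)^2 * ((l:ℝ)+1)^2) * Real.sqrt ((l1+l2)/(l1+l2+mu)) ^ (k+l) := by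
  have hll : (0:ℝ) < l1 + l2 := by linarith
  have hs0 : (0:ℝ) < l1 + l2 + mu := by linarith
  set s := l1 + l2 + mu with hsdef
  set ρ := Real.sqrt ((l1+l2)/s) with hρdef
  have hρ0 : 0 ≤ ρ := Real.sqrt_nonneg _
  have hρ1 : ρ ≤ 1 := Real.sqrt_le_one.mpr (by rw [div_le_one hs0]; linarith)
  have hρ2 : ρ^2 = (l1+l2)/s := Real.sq_sqrt (by positivity)
  by_cases h0 : k = 0 ∧ l = 0
  · simp [piMeasure, h0.1, h0.2]
  · have hk1 : 1 ≤ k := by omega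
    rw [piMeasure, if_neg h0, Nat.min_eq_right hlk, Nat.max_eq_left hlk, Finset.mul_sum]
    have hterm : ∀ i ∈ Finset.range (l+1),
        l1^k * l2^l * (((k - l + i : ℕ):ℝ) * 2^i * (Nat.choose (k+l-i) k : ℝ) /
          (((k+l-i : ℕ):ℝ) * (l1+l2)^i * s^(k+l-i))) ≤ ρ^(k+l) := by
      intro i hi
      rw [Finset.mem_range] at hi
      have hil : i ≤ l := by omega
      have hN1 : 1 ≤ k + l - i := by omega
      have hcast : ((k - l + i : ℕ):ℝ) ≤ ((k + l - i : ℕ):ℝ) :=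
        Nat.cast_le.mpr (by omega)
      have hcc : (2:ℝ)^i * (Nat.choose (k+l-i) k : ℝ) ≤ (Nat.choose (k+l) k : ℝ) := by
        exact_mod_cast two_pow_mul_choose_le hlk i hil
      have hNpos : (0:ℝ) < ((k+l-i : ℕ):ℝ) := by exact_mod_cast hN1
      calc l1^k * l2^l * (((k - l + i : ℕ):ℝ) * 2^i * (Nat.choose (k+l-i) k : ℝ) /
            (((k+l-i : ℕ):ℝ) * (l1+l2)^i * s^(k+l-i)))
          = ((k - l + i : ℕ):ℝ) * ((2^i * (Nat.choose (k+l-i) k : ℝ)) * (l1^k * l2^l)) /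
            (((k+l-i : ℕ):ℝ) * (l1+l2)^i * s^(k+l-i)) := by ring
        _ ≤ ((k + l - i : ℕ):ℝ) * (((Nat.choose (k+l) k : ℝ)) * (l1^k * l2^l)) /
            (((k+l-i : ℕ):ℝ) * (l1+l2)^i * s^(k+l-i)) := by
            gcongr
        _ ≤ ((k + l - i : ℕ):ℝ) * ((l1+l2)^(k+l)) /
            (((k+l-i : ℕ):ℝ) * (l1+l2)^i * s^(k+l-i)) := by
            gcongr
            exact choose_mul_pow_le h1.le h2.le k l
        _ = (l1+l2)^(k+l-i) / s^(k+l-i) := by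
            have hpow : (l1+l2)^(k+l) = (l1+l2)^i * (l1+l2)^(k+l-i) := by
              rw [← pow_add]; congr 1; omega
            rw [hpow]
            field_simp
        _ = ((l1+l2)/s)^(k+l-i) := by rw [div_pow]
        _ ≤ ρ^(k+l) := by
            rw [← hρ2, ← pow_mul]
            exact pow_le_pow_of_le_one hρ0 hρ1 (by omega)
    calc (∑ i ∈ Finset.range (l+1), l1^k * l2^l *
            (((k - l + i : ℕ):ℝ) * 2^i * (Nat.choose (k+l-i) k : ℝ) /
            (((k+l-i : ℕ):ℝ) * (l1+l2)^i * s^(k+l-i))))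
        ≤ ∑ i ∈ Finset.range (l+1), ρ^(k+l) := Finset.sum_le_sum hterm
      _ = ((l:ℝ)+1) * ρ^(k+l) := by
          rw [Finset.sum_const, Finset.card_range, nsmul_eq_mul]; push_cast; ring
      _ ≤ (((k:ℝ)+1)^2 * ((l:ℝ)+1)^2) * ρ^(k+l) := by
          have hb : ((l:ℝ)+1) ≤ ((k:ℝ)+1)^2 * ((l:ℝ)+1)^2 := by
            have hknn : (0:ℝ) ≤ (k:ℝ) := Nat.cast_nonneg k
            have hlnn : (0:ℝ) ≤ (l:ℝ) := Nat.cast_nonneg l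
            have e1 : (1:ℝ) ≤ ((k:ℝ)+1)^2 := by nlinarith
            have e2 : ((l:ℝ)+1) ≤ ((l:ℝ)+1)^2 := by nlinarith
            nlinarith [mul_le_mul e1 e2 (by linarith) (by positivity)]
          exact mul_le_mul_of_nonneg_right hb (by positivity)

lemma summable_u {ρ : ℝ} (h0 : 0 ≤ ρ) (h1 : ρ < 1) :
    Summable (fun n : ℕ => ((n:ℝ)+1)^2 * ρ^n) := by
  have hn : ‖ρ‖ < 1 := by rwa [Real.norm_eq_abs, abs_of_nonneg h0]
  have t2 := summable_pow_mul_geometric_of_norm_lt_one (R := ℝ) 2 hn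
  have t1 := summable_pow_mul_geometric_of_norm_lt_one (R := ℝ) 1 hn
  have t0 := summable_pow_mul_geometric_of_norm_lt_one (R := ℝ) 0 hn
  exact ((t2.add (t1.mul_left 2)).add t0).congr (fun n => by push_cast; ring)

lemma summable_piMeasure {l1 l2 mu : ℝ} (h1 : 0 < l1) (h2 : 0 < l2) (hmu : 0 < mu) :
    Summable (fun p : ℕ × ℕ => piMeasure l1 l2 mu p.1 p.2) := by
  have hll : (0:ℝ) < l1 + l2 := by linarith
  have hs0 : (0:ℝ) < l1 + l2 + mu := by linarith
  set ρ := Real.sqrt ((l1+l2)/(l1+l2+mu)) with hρdef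
  have hρ0 : 0 ≤ ρ := Real.sqrt_nonneg _
  have hρ1 : ρ < 1 := by
    rw [hρdef]
    rw [show (1:ℝ) = Real.sqrt 1 from (Real.sqrt_one).symm]
    apply Real.sqrt_lt_sqrt (by positivity)
    rw [div_lt_one hs0]; linarith
  set u : ℕ → ℝ := fun n => ((n:ℝ)+1)^2 * ρ^n with hudef
  have hu : Summable u := summable_u hρ0 hρ1
  have hun : ∀ n, 0 ≤ u n := fun n => by positivity
  refine Summable.of_nonneg_of_le (fun p => piMeasure_nonneg h1 h2 hmu p.1 p.2)
    (fun p => ?_) (hu.mul_of_nonneg hu hun hun)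
  obtain ⟨k, l⟩ := p
  have key : piMeasure l1 l2 mu k l ≤ (((k:ℝ)+1)^2 * ((l:ℝ)+1)^2) * ρ^(k+l) := by
    rcases le_total l k with h | h
    · exact piMeasure_le_aux h1 h2 hmu h
    · rw [piMeasure_symm]
      have := piMeasure_le_aux h2 h1 hmu h
      rw [show l2 + l1 = l1 + l2 from add_comm _ _] at this
      calc piMeasure l2 l1 mu l k ≤ (((l:ℝ)+1)^2 * ((k:ℝ)+1)^2) * ρ^(l+k) := this
        _ = (((k:ℝ)+1)^2 * ((l:ℝ)+1)^2) * ρ^(k+l) := by rw [add_comm l k]; ring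
  calc piMeasure l1 l2 mu k l ≤ (((k:ℝ)+1)^2 * ((l:ℝ)+1)^2) * ρ^(k+l) := key
    _ = u k * u l := by rw [pow_add]; ring

lemma piMeasure_offdiag {l1 l2 mu : ℝ} (h1 : 0 < l1) (h2 : 0 < l2) (hmu : 0 < mu)
    {k l : ℕ} (hlk : l < k) :
    piMeasure l1 l2 mu k l * (l1 + l2 + mu) =
      piMeasure l1 l2 mu (k-1) l * l1 +
      (if 0 < l then piMeasure l1 l2 mu k (l-1) * l2 else 0) := by
  have hll : (0:ℝ) < l1 + l2 := by linarith
  have hs0 : (0:ℝ) < l1 + l2 + mu := by linarith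
  rcases Nat.eq_zero_or_pos l with hl0 | hl1
  · subst hl0
    rw [if_neg (by omega), piMeasure_k0 h1 h2 hmu, piMeasure_k0 h1 h2 hmu, add_zero]
    have hk : k = (k-1) + 1 := by omega
    rw [hk, pow_succ]
    field_simp
    ring
    simp
  · rw [if_pos hl1]
    have hk2 : 1 ≤ k - 1 := by omega
    rw [piMeasure, piMeasure, piMeasure, if_neg (by omega), if_neg (by omega),
      if_neg (by omega)]
    rw [Nat.min_eq_right hlk.le, Nat.max_eq_left hlk.le,
      Nat.min_eq_right (by omega : l ≤ k - 1), Nat.max_eq_left (by omega : l ≤ k - 1),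
      Nat.min_eq_right (by omega : l - 1 ≤ k), Nat.max_eq_left (by omega : l - 1 ≤ k)]
    have hl1' : l - 1 + 1 = l := by omega
    have hpow1 : l1 ^ (k-1) * l1 = l1 ^ k := by
      rw [← pow_succ, show k-1+1 = k from by omega]
    have hpow2 : l2 ^ (l-1) * l2 = l2 ^ l := by
      rw [← pow_succ, show l-1+1 = l from by omega]
    -- extend the third sum from range l to range (l+1)
    have hext : ∑ i ∈ Finset.range (l - 1 + 1),
        ((k - (l-1) + i : ℕ) : ℝ) * 2 ^ i * (Nat.choose (k + (l-1) - i) k : ℝ) /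
          (((k + (l-1) - i : ℕ) : ℝ) * (l1 + l2) ^ i * (l1 + l2 + mu) ^ (k + (l-1) - i))
        = ∑ i ∈ Finset.range (l + 1),
        ((k - (l-1) + i : ℕ) : ℝ) * 2 ^ i * (Nat.choose (k + (l-1) - i) k : ℝ) /
          (((k + (l-1) - i : ℕ) : ℝ) * (l1 + l2) ^ i * (l1 + l2 + mu) ^ (k + (l-1) - i)) := by
      rw [hl1', Finset.sum_range_succ (n := l)]
      have hz : Nat.choose (k + (l-1) - l) k = 0 :=
        Nat.choose_eq_zero_of_lt (by omega)
      rw [hz]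
      norm_num
    rw [hext]
    set S1 := ∑ i ∈ Finset.range (l + 1),
        ((k - l + i : ℕ) : ℝ) * 2 ^ i * (Nat.choose (k + l - i) k : ℝ) /
          (((k + l - i : ℕ) : ℝ) * (l1 + l2) ^ i * (l1 + l2 + mu) ^ (k + l - i)) with hS1def
    set S2 := ∑ i ∈ Finset.range (l + 1),
        ((k - 1 - l + i : ℕ) : ℝ) * 2 ^ i * (Nat.choose (k - 1 + l - i) (k-1) : ℝ) /
          (((k - 1 + l - i : ℕ) : ℝ) * (l1 + l2) ^ i * (l1 + l2 + mu) ^ (k - 1 + l - i)) with hS2def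
    set S3 := ∑ i ∈ Finset.range (l + 1),
        ((k - (l-1) + i : ℕ) : ℝ) * 2 ^ i * (Nat.choose (k + (l-1) - i) k : ℝ) /
          (((k + (l-1) - i : ℕ) : ℝ) * (l1 + l2) ^ i * (l1 + l2 + mu) ^ (k + (l-1) - i)) with hS3def
    have hmain : S1 * (l1 + l2 + mu) = S2 + S3 := by
      rw [hS1def, hS2def, hS3def]
      rw [Finset.sum_mul, ← Finset.sum_add_distrib]
      apply Finset.sum_congr rfl
      intro i hi
      rw [Finset.mem_range] at hi
      have hil : i ≤ l := by omega
      obtain ⟨c, rfl⟩ : ∃ c, k = l + c + 1 := ⟨k - l - 1, by omega⟩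
      obtain ⟨j, rfl⟩ : ∃ j, l = i + j := ⟨l - i, by omega⟩
      rw [show (i+j) + c + 1 - (i+j) + i = c+i+1 from by omega,
        show (i+j) + c + 1 + (i+j) - i = (i+2*j+c)+1 from by omega,
        show (i+j) + c + 1 - 1 - (i+j) + i = c+i from by omega,
        show (i+j) + c + 1 - 1 + (i+j) - i = i+2*j+c from by omega,
        show (i+j) + c + 1 - 1 = i+j+c from by omega,
        show (i+j) + c + 1 - ((i+j)-1) + i = c+i+2 from by omega,
        show (i+j) + c + 1 + ((i+j)-1) - i = i+2*j+c from by omega]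
      set M := i + 2*j + c with hMdef
      have hM1 : 1 ≤ M := by omega
      have hMc : ((M:ℕ):ℝ) = (i:ℝ)+2*(j:ℝ)+(c:ℝ) := by rw [hMdef]; push_cast; ring
      have hMne : ((M:ℕ):ℝ) ≠ 0 := by
        have : (0:ℝ) < ((M:ℕ):ℝ) := by exact_mod_cast hM1
        linarith
      have hM1ne : ((M:ℕ):ℝ) + 1 ≠ 0 := by positivity
      have hPne : (l1+l2)^i ≠ 0 := by positivity
      have hSne : (l1+l2+mu) ≠ 0 := by positivity
      have hSpne : (l1+l2+mu)^M ≠ 0 := by positivity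
      have hP : (Nat.choose (M+1) (i+j+c+1) : ℝ)
          = (Nat.choose M (i+j+c) : ℝ) + (Nat.choose M (i+j+c+1) : ℝ) := by
        exact_mod_cast congrArg (Nat.cast (R := ℝ)) (Nat.choose_succ_succ M (i+j+c))
      have hMR : (((M:ℕ):ℝ)+1) * (Nat.choose M (i+j+c) : ℝ)
          = (Nat.choose (M+1) (i+j+c+1) : ℝ) * ((i:ℝ)+(j:ℝ)+(c:ℝ)+1) := by
        exact_mod_cast congrArg (Nat.cast (R := ℝ)) (Nat.add_one_mul_choose_eq M (i+j+c))
      have key : ((c:ℝ)+(i:ℝ)+1) * (Nat.choose (M+1) (i+j+c+1) : ℝ) * ((M:ℕ):ℝ)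
          = (((c:ℝ)+(i:ℝ)) * (Nat.choose M (i+j+c) : ℝ)
            + ((c:ℝ)+(i:ℝ)+2) * (Nat.choose M (i+j+c+1) : ℝ)) * (((M:ℕ):ℝ)+1) := by
        linear_combination 2 * hMR + (((c:ℝ)+(i:ℝ)+2) * (((M:ℕ):ℝ)+1)) * hP
          - (Nat.choose (M+1) (i+j+c+1) : ℝ) * hMc
      have hD1 : ((M+1 : ℕ):ℝ) * (l1+l2)^i * (l1+l2+mu)^(M+1) ≠ 0 := by
        push_cast
        positivity
      have hD2 : ((M : ℕ):ℝ) * (l1+l2)^i * (l1+l2+mu)^M ≠ 0 := by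
        exact mul_ne_zero (mul_ne_zero hMne hPne) hSpne
      rw [div_mul_eq_mul_div, ← add_div, div_eq_div_iff hD1 hD2]
      push_cast
      rw [pow_succ]
      linear_combination (2:ℝ)^i * (l1+l2)^i * (l1+l2+mu)^M * (l1+l2+mu) * key
    linear_combination (l1^k*l2^l) * hmain - (S2*l2^l) * hpow1 - (S3*l1^k) * hpow2

lemma piMeasure_diag {l1 l2 mu : ℝ} (h1 : 0 < l1) (h2 : 0 < l2) (hmu : 0 < mu)
    {k : ℕ} (hk : 1 ≤ k) :
    piMeasure l1 l2 mu k k * (l1 + l2) =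
      piMeasure l1 l2 mu (k-1) k * l1 + piMeasure l1 l2 mu k (k-1) * l2 := by
  have hll : (0:ℝ) < l1 + l2 := by linarith
  have hs0 : (0:ℝ) < l1 + l2 + mu := by linarith
  obtain ⟨m, rfl⟩ : ∃ m, k = m + 1 := ⟨k - 1, by omega⟩
  simp only [Nat.add_sub_cancel]
  rw [piMeasure, piMeasure, piMeasure, if_neg (by omega), if_neg (by omega),
    if_neg (by omega)]
  rw [min_self, max_self,
    Nat.min_eq_left (by omega : m ≤ m + 1), Nat.max_eq_right (by omega : m ≤ m + 1),
    Nat.min_eq_right (by omega : m ≤ m + 1), Nat.max_eq_left (by omega : m ≤ m + 1)]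
  set S1 := ∑ i ∈ Finset.range (m + 1 + 1),
      ((m + 1 - (m + 1) + i : ℕ) : ℝ) * 2 ^ i * (Nat.choose (m + 1 + (m + 1) - i) (m+1) : ℝ) /
        (((m + 1 + (m + 1) - i : ℕ) : ℝ) * (l1 + l2) ^ i * (l1 + l2 + mu) ^ (m + 1 + (m + 1) - i)) with hS1def
  set S2 := ∑ i ∈ Finset.range (m + 1),
      ((m + 1 - m + i : ℕ) : ℝ) * 2 ^ i * (Nat.choose (m + (m + 1) - i) (m+1) : ℝ) /
        (((m + (m + 1) - i : ℕ) : ℝ) * (l1 + l2) ^ i * (l1 + l2 + mu) ^ (m + (m + 1) - i)) with hS2def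
  set S3 := ∑ i ∈ Finset.range (m + 1),
      ((m + 1 - m + i : ℕ) : ℝ) * 2 ^ i * (Nat.choose (m + 1 + m - i) (m+1) : ℝ) /
        (((m + 1 + m - i : ℕ) : ℝ) * (l1 + l2) ^ i * (l1 + l2 + mu) ^ (m + 1 + m - i)) with hS3def
  have hmain : S1 * (l1 + l2) = S2 + S3 := by
    rw [hS1def, hS2def, hS3def]
    rw [Finset.sum_range_succ']
    have hz : ((m + 1 - (m + 1) + 0 : ℕ) : ℝ) = 0 := by norm_num
    rw [hz]
    rw [zero_mul, zero_mul, zero_div, add_zero, Finset.sum_mul, ← Finset.sum_add_distrib]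
    apply Finset.sum_congr rfl
    intro i hi
    rw [Finset.mem_range] at hi
    rw [show m + 1 - (m + 1) + (i + 1) = i + 1 from by omega,
      show m + 1 + (m + 1) - (i + 1) = m + (m + 1) - i from by omega,
      show m + 1 - m + i = i + 1 from by omega,
      show m + 1 + m - i = m + (m + 1) - i from by omega]
    have hE : 1 ≤ m + (m + 1) - i := by omega
    have hEne : ((m + (m + 1) - i : ℕ) : ℝ) ≠ 0 := by
      have : (0:ℝ) < ((m + (m + 1) - i : ℕ) : ℝ) := by exact_mod_cast hE
      linarith
    have hPne : (l1+l2) ≠ 0 := by positivity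
    have hPine : (l1+l2)^i ≠ 0 := by positivity
    have hSne : (l1+l2+mu)^(m + (m + 1) - i) ≠ 0 := by positivity
    rw [pow_succ, pow_succ]
    field_simp
    ring
  linear_combination (l1^(m+1) * l2^(m+1)) * hmain
    - (S2 * l2^(m+1)) * (pow_succ l1 m) - (S3 * l1^(m+1)) * (pow_succ l2 m)


lemma piMeasure_balance2 {l1 l2 mu : ℝ} (h1 : 0 < l1) (h2 : 0 < l2) (hmu : 0 < mu)
    (k l : ℕ) (h : k ≠ l) :
    piMeasure l1 l2 mu k l * (l1 + l2 + mu) =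
      (if 0 < k then piMeasure l1 l2 mu (k - 1) l * l1 else 0) +
      (if 0 < l then piMeasure l1 l2 mu k (l - 1) * l2 else 0) := by
  rcases lt_or_gt_of_ne h with hkl | hlk
  · -- k < l
    rw [if_pos (show 0 < l by omega)]
    rw [piMeasure_symm l1 l2 mu k l, piMeasure_symm l1 l2 mu k (l-1)]
    have h0 := piMeasure_offdiag h2 h1 hmu hkl
    rw [show l2 + l1 + mu = l1 + l2 + mu from by ring] at h0
    rw [h0, piMeasure_symm l2 l1 mu (l-1) k, add_comm]
    congr 1
    by_cases hk : 0 < k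
    · rw [if_pos hk, if_pos hk, piMeasure_symm l2 l1 mu l (k-1)]
    · rw [if_neg hk, if_neg hk]
  · rw [if_pos (show 0 < k by omega)]
    exact piMeasure_offdiag h1 h2 hmu hlk

lemma piMeasure_tsum {l1 l2 mu : ℝ} (h1 : 0 < l1) (h2 : 0 < l2) (hmu : 0 < mu) :
    mu * ∑' p : ℕ × ℕ, (if p.1 ≠ p.2 then piMeasure l1 l2 mu p.1 p.2 else 0) = l1 + l2 := by
  classical
  set F : ℕ × ℕ → ℝ := fun p => piMeasure l1 l2 mu p.1 p.2 with hFdef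
  have hF : Summable F := summable_piMeasure h1 h2 hmu
  have hFnn : ∀ p, 0 ≤ F p := fun p => piMeasure_nonneg h1 h2 hmu p.1 p.2
  have hite : ∀ (P : ℕ × ℕ → Prop) (_ : DecidablePred P),
      Summable (fun p => if P p then F p else 0) := by
    intro P _
    refine Summable.of_nonneg_of_le (fun p => ?_) (fun p => ?_) hF
    · split_ifs with h
      · exact hFnn p
      · exact le_refl 0
    · split_ifs with h
      · exact le_refl _
      · exact hFnn p
  have hinj_diag : Function.Injective (fun n : ℕ => ((n, n) : ℕ × ℕ)) := by
    intro a b h; simpa using congrArg Prod.fst h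
  have hinj_up : Function.Injective (fun n : ℕ => ((n, n+1) : ℕ × ℕ)) := by
    intro a b h; simpa using congrArg Prod.fst h
  have hinj_dn : Function.Injective (fun n : ℕ => ((n+1, n) : ℕ × ℕ)) := by
    intro a b h; simpa using congrArg Prod.snd h
  have hdiag : Summable (fun n : ℕ => F (n, n)) := hF.comp_injective hinj_diag
  have hup : Summable (fun n : ℕ => F (n, n+1)) := hF.comp_injective hinj_up
  have hdn : Summable (fun n : ℕ => F (n+1, n)) := hF.comp_injective hinj_dn
  have hdiag' : Summable (fun n : ℕ => F (n+1, n+1)) :=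
    hF.comp_injective (fun a b h => by simpa using congrArg Prod.fst h)
  set Soff := ∑' p : ℕ × ℕ, (if p.1 ≠ p.2 then F p else 0) with hSoffdef
  set T := ∑' p : ℕ × ℕ, F p with hTdef
  set A := ∑' n : ℕ, F (n, n+1) with hAdef
  set B := ∑' n : ℕ, F (n+1, n) with hBdef
  set Dp := ∑' n : ℕ, F (n+1, n+1) with hDpdef
  -- (a) : T = Soff + (1 + Dp)
  have ediag : (∑' p : ℕ × ℕ, (if p.1 = p.2 then F p else 0)) = 1 + Dp := by
    have e1 : ∑' n : ℕ, F (n, n) = ∑' p : ℕ × ℕ, (if p.1 = p.2 then F p else 0) := by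
      have e0 := Function.Injective.tsum_eq hinj_diag
        (f := fun p : ℕ × ℕ => if p.1 = p.2 then F p else 0) (by
          intro p hp
          simp only [Function.mem_support, ne_eq] at hp
          by_cases h : p.1 = p.2
          · exact ⟨p.1, by rw [Prod.ext_iff]; exact ⟨rfl, h⟩⟩
          · exact absurd (by rw [if_neg h]) hp)
      simpa using e0
    rw [← e1, Summable.tsum_eq_zero_add hdiag]
    have : F (0, 0) = 1 := by simp [hFdef, piMeasure]
    rw [this]
  have eqa : T = Soff + (1 + Dp) := by
    rw [hTdef, hSoffdef, ← ediag]
    rw [← Summable.tsum_add (hite _ _) (hite _ _)]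
    apply tsum_congr
    intro p
    by_cases h : p.1 = p.2 <;> simp [h]
  -- auxiliary : tsum of near-diagonal indicators
  have eup : (∑' p : ℕ × ℕ, (if p.1 + 1 = p.2 then F p else 0)) = A := by
    rw [hAdef]
    have e1 : ∑' n : ℕ, F (n, n+1) = ∑' p : ℕ × ℕ, (if p.1 + 1 = p.2 then F p else 0) := by
      have e0 := Function.Injective.tsum_eq hinj_up
        (f := fun p : ℕ × ℕ => if p.1 + 1 = p.2 then F p else 0) (by
          intro p hp
          simp only [Function.mem_support, ne_eq] at hp
          by_cases h : p.1 + 1 = p.2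
          · exact ⟨p.1, by rw [Prod.ext_iff]; exact ⟨rfl, h⟩⟩
          · exact absurd (by rw [if_neg h]) hp)
      simpa using e0
    rw [← e1]
  have edn : (∑' p : ℕ × ℕ, (if p.2 + 1 = p.1 then F p else 0)) = B := by
    rw [hBdef]
    have e1 : ∑' n : ℕ, F (n+1, n) = ∑' p : ℕ × ℕ, (if p.2 + 1 = p.1 then F p else 0) := by
      have e0 := Function.Injective.tsum_eq hinj_dn
        (f := fun p : ℕ × ℕ => if p.2 + 1 = p.1 then F p else 0) (by
          intro p hp
          simp only [Function.mem_support, ne_eq] at hp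
          by_cases h : p.2 + 1 = p.1
          · exact ⟨p.2, by rw [Prod.ext_iff]; exact ⟨h, rfl⟩⟩
          · exact absurd (by rw [if_neg h]) hp)
      simpa using e0
    rw [← e1]
  -- shift injections
  have hinj_sh1 : Function.Injective (fun q : ℕ × ℕ => ((q.1+1, q.2) : ℕ × ℕ)) := by
    intro a b h
    have h1 := congrArg Prod.fst h
    have h2 := congrArg Prod.snd h
    simp only at h1 h2
    exact Prod.ext (by omega) h2
  have hinj_sh2 : Function.Injective (fun q : ℕ × ℕ => ((q.1, q.2+1) : ℕ × ℕ)) := by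
    intro a b h
    have h1 := congrArg Prod.fst h
    have h2 := congrArg Prod.snd h
    simp only at h1 h2
    exact Prod.ext h1 (by omega)
  have hvan1 : ∀ p ∉ Set.range (fun q : ℕ × ℕ => ((q.1+1, q.2) : ℕ × ℕ)),
      (if p.1 ≠ p.2 ∧ 0 < p.1 then F (p.1 - 1, p.2) * l1 else 0) = 0 := by
    intro p hp
    rw [if_neg]
    rintro ⟨-, hpos⟩
    exact hp ⟨(p.1 - 1, p.2), by simp [Prod.ext_iff]; omega⟩
  have hvan2 : ∀ p ∉ Set.range (fun q : ℕ × ℕ => ((q.1, q.2+1) : ℕ × ℕ)),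
      (if p.1 ≠ p.2 ∧ 0 < p.2 then F (p.1, p.2 - 1) * l2 else 0) = 0 := by
    intro p hp
    rw [if_neg]
    rintro ⟨-, hpos⟩
    exact hp ⟨(p.1, p.2 - 1), by simp [Prod.ext_iff]; omega⟩
  have hcomp1 : ∀ q : ℕ × ℕ,
      (if (q.1+1 : ℕ) ≠ q.2 ∧ 0 < q.1 + 1 then F (q.1 + 1 - 1, q.2) * l1 else 0)
        = (F q - (if q.1 + 1 = q.2 then F q else 0)) * l1 := by
    intro q
    by_cases h : q.1 + 1 = q.2 <;> simp [h]
  have hcomp2 : ∀ q : ℕ × ℕ,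
      (if (q.1 : ℕ) ≠ q.2 + 1 ∧ 0 < q.2 + 1 then F (q.1, q.2 + 1 - 1) * l2 else 0)
        = (F q - (if q.2 + 1 = q.1 then F q else 0)) * l2 := by
    intro q
    by_cases h : q.2 + 1 = q.1 <;> simp [h, Ne.symm, ne_comm]
  have hsubsum1 : Summable (fun q : ℕ × ℕ => (F q - (if q.1 + 1 = q.2 then F q else 0)) * l1) :=
    (hF.sub (hite _ _)).mul_right l1
  have hsubsum2 : Summable (fun q : ℕ × ℕ => (F q - (if q.2 + 1 = q.1 then F q else 0)) * l2) :=
    (hF.sub (hite _ _)).mul_right l2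
  have hXsum : Summable (fun p : ℕ × ℕ => if p.1 ≠ p.2 ∧ 0 < p.1 then F (p.1 - 1, p.2) * l1 else 0) := by
    rw [← hinj_sh1.summable_iff hvan1]
    exact hsubsum1.congr (fun q => (hcomp1 q).symm)
  have hYsum : Summable (fun p : ℕ × ℕ => if p.1 ≠ p.2 ∧ 0 < p.2 then F (p.1, p.2 - 1) * l2 else 0) := by
    rw [← hinj_sh2.summable_iff hvan2]
    exact hsubsum2.congr (fun q => (hcomp2 q).symm)
  have eX : (∑' p : ℕ × ℕ, if p.1 ≠ p.2 ∧ 0 < p.1 then F (p.1 - 1, p.2) * l1 else 0)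
      = (T - A) * l1 := by
    have e0 := hinj_sh1.tsum_eq
      (f := fun p : ℕ × ℕ => if p.1 ≠ p.2 ∧ 0 < p.1 then F (p.1 - 1, p.2) * l1 else 0)
      (fun p hp => by by_contra hc; exact hp (hvan1 p hc))
    rw [← e0, tsum_congr hcomp1, tsum_mul_right,
      Summable.tsum_sub hF (hite _ _), eup, ← hTdef]
  have eY : (∑' p : ℕ × ℕ, if p.1 ≠ p.2 ∧ 0 < p.2 then F (p.1, p.2 - 1) * l2 else 0)
      = (T - B) * l2 := by
    have e0 := hinj_sh2.tsum_eq
      (f := fun p : ℕ × ℕ => if p.1 ≠ p.2 ∧ 0 < p.2 then F (p.1, p.2 - 1) * l2 else 0)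
      (fun p hp => by by_contra hc; exact hp (hvan2 p hc))
    rw [← e0, tsum_congr hcomp2, tsum_mul_right,
      Summable.tsum_sub hF (hite _ _), edn, ← hTdef]
  have eqb : Soff * (l1 + l2 + mu) = (T - A) * l1 + (T - B) * l2 := by
    rw [hSoffdef, ← tsum_mul_right]
    have estep : ∀ p : ℕ × ℕ, (if p.1 ≠ p.2 then F p else 0) * (l1 + l2 + mu)
        = (if p.1 ≠ p.2 ∧ 0 < p.1 then F (p.1 - 1, p.2) * l1 else 0)
          + (if p.1 ≠ p.2 ∧ 0 < p.2 then F (p.1, p.2 - 1) * l2 else 0) := by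
      intro p
      by_cases h : p.1 = p.2
      · simp [h]
      · rw [if_pos h, hFdef]
        have := piMeasure_balance2 h1 h2 hmu p.1 p.2 h
        rw [this]
        congr 1
        · by_cases hp : 0 < p.1
          · rw [if_pos hp, if_pos ⟨h, hp⟩]
          · rw [if_neg hp, if_neg (by tauto)]
        · by_cases hp : 0 < p.2
          · rw [if_pos hp, if_pos ⟨h, hp⟩]
          · rw [if_neg hp, if_neg (by tauto)]
    rw [tsum_congr estep, Summable.tsum_add hXsum hYsum, eX, eY]
  have eqc : Dp * (l1 + l2) = A * l1 + B * l2 := by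
    rw [hDpdef, ← tsum_mul_right]
    have estep : ∀ n : ℕ, F (n+1, n+1) * (l1 + l2) = F (n, n+1) * l1 + F (n+1, n) * l2 := by
      intro n
      have := piMeasure_diag h1 h2 hmu (k := n+1) (by omega)
      simpa only [Nat.add_sub_cancel, hFdef] using this
    rw [tsum_congr estep, Summable.tsum_add (hup.mul_right l1) (hdn.mul_right l2),
      tsum_mul_right, tsum_mul_right, ← hAdef, ← hBdef]
  linear_combination eqb + (l1 + l2) * eqa + eqc


/-- The measure `π` satisfies the global balance equations of the Markov chain with
rates `q((k,ℓ),(k+1,ℓ)) = λ₁`, `q((k,ℓ),(k,ℓ+1)) = λ₂` and `q((k,ℓ),(0,0)) = μ`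
for `k ≠ ℓ`. -/
theorem piMeasure_balance (l1 l2 mu : ℝ) (h1 : 0 < l1) (h2 : 0 < l2) (hmu : 0 < mu) :
    (piMeasure l1 l2 mu 0 0 * (l1 + l2) =
      mu * ∑' p : ℕ × ℕ, if p.1 ≠ p.2 then piMeasure l1 l2 mu p.1 p.2 else 0) ∧
    (∀ k l : ℕ, k ≠ l →
      piMeasure l1 l2 mu k l * (l1 + l2 + mu) =
        (if 0 < k then piMeasure l1 l2 mu (k - 1) l * l1 else 0) +
        (if 0 < l then piMeasure l1 l2 mu k (l - 1) * l2 else 0)) ∧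
    (∀ k : ℕ, 1 ≤ k →
      piMeasure l1 l2 mu k k * (l1 + l2) =
        piMeasure l1 l2 mu (k - 1) k * l1 + piMeasure l1 l2 mu k (k - 1) * l2) := by
  refine ⟨?_, ?_, ?_⟩
  · rw [piMeasure_zero_zero, one_mul, piMeasure_tsum h1 h2 hmu]
  · exact fun k l h => piMeasure_balance2 h1 h2 hmu k l h
  · exact fun k hk => piMeasure_diag h1 h2 hmu hk
end

section
/- Let K be a negative-binomial-type random variable: K is the number of failures before the z-th success in i.i.d. Bernoulli(p) trials, where p = λ₂/(λ₁+λ₂) with 0 < λ₁ < λ₂. Then the probability P_A = P(K ≥ z) + Σ_{k=0}^{z-1} P(K=k)·(λ₁/λ₂)^{z-k} satisfies P_A = 1 − Σ_{k=0}^{z} C(z+k−1, z−1)·(p^z (1−p)^k − p^k (1−p)^z). -/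
open scoped BigOperators

/-- Rosenfeld's corrected double-spend probability.  With `p = λ₂/(λ₁+λ₂)` and
`P(K=k) = C(z+k-1, z-1) p^z (1-p)^k` the negative binomial probabilities,
`P_A = P(K ≥ z) + Σ_{k=0}^{z-1} P(K=k) (λ₁/λ₂)^{z-k}`
equals `1 - Σ_{k=0}^{z} C(z+k-1, z-1) (p^z (1-p)^k - p^k (1-p)^z)`. -/
theorem attack_probability (l1 l2 : ℝ) (h1 : 0 < l1) (h12 : l1 < l2) (z : ℕ) (hz : 1 ≤ z) :
    (1 - ∑ k ∈ Finset.range z,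
        (Nat.choose (z + k - 1) (z - 1) : ℝ) * (l2 / (l1 + l2)) ^ z * (1 - l2 / (l1 + l2)) ^ k)
      + ∑ k ∈ Finset.range z,
        (Nat.choose (z + k - 1) (z - 1) : ℝ) * (l2 / (l1 + l2)) ^ z * (1 - l2 / (l1 + l2)) ^ k
          * (l1 / l2) ^ (z - k)
    = 1 - ∑ k ∈ Finset.range (z + 1),
        (Nat.choose (z + k - 1) (z - 1) : ℝ) *
          ((l2 / (l1 + l2)) ^ z * (1 - l2 / (l1 + l2)) ^ k
            - (l2 / (l1 + l2)) ^ k * (1 - l2 / (l1 + l2)) ^ z) := by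
  have h2 : 0 < l2 := h1.trans h12
  have hs : (0:ℝ) < l1 + l2 := by linarith
  set p : ℝ := l2 / (l1 + l2) with hp
  have hq : 1 - p = l1 / (l1 + l2) := by
    rw [hp]; field_simp; ring
  have hl : l1 / l2 = (1 - p) / p := by
    rw [hq, hp]; rw [div_div_div_eq]; rw [mul_comm]
    exact (mul_div_mul_left _ _ (ne_of_gt hs)).symm
  have hp0 : p ≠ 0 := by
    rw [hp]; positivity
  -- termwise identity for k < z
  have key : ∀ k ∈ Finset.range z,
      (Nat.choose (z + k - 1) (z - 1) : ℝ) * p ^ z * (1 - p) ^ k * (l1 / l2) ^ (z - k)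
      = (Nat.choose (z + k - 1) (z - 1) : ℝ) * (p ^ k * (1 - p) ^ z) := by
    intro k hk
    clear_value p
    rw [Finset.mem_range] at hk
    obtain ⟨m, hm⟩ : ∃ m, z = k + m := ⟨z - k, by omega⟩
    have hzk : z - k = m := by omega
    rw [hl, hzk, hm, pow_add, pow_add, div_pow]
    rw [div_eq_mul_inv]
    have hinv : p ^ m * (p ^ m)⁻¹ = 1 := mul_inv_cancel₀ (pow_ne_zero _ hp0)
    linear_combination ((Nat.choose (k + m + k - 1) (k + m - 1) : ℝ) * p ^ k * (1 - p) ^ k * (1 - p) ^ m) * hinv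
  rw [Finset.sum_congr rfl key, Finset.sum_range_succ]
  have hlast : (Nat.choose (z + z - 1) (z - 1) : ℝ) *
      (p ^ z * (1 - p) ^ z - p ^ z * (1 - p) ^ z) = 0 := by ring
  rw [hlast, add_zero]
  simp only [mul_sub, Finset.sum_sub_distrib, mul_assoc]
  ring
end
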